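/- arXiv:2107.12881 — 3 statements merged into one kernel-verified Lean document; each statement's English description precedes it below -/
import Mathlib

section
/- Let G be a bipartite graph whose edge set is partitioned as E = F₁ ∪ ... ∪ F_{2k-1} into 2k-1 nonempty sets, such that for every pair i < j the set Fᵢ ∪ Fⱼ contains a matching of size k. Then there exist a k-element subset I ⊆ [2k-1] and pairwise disjoint edges e_i ∈ F_i for i ∈ I (a rainbow matching of size k). -/
/-- A set of edges of a bipartite graph (edges being pairs) is a matching if no
two of its edges share an endpoint. -/
def IsBipMatching {α β : Type*} (N : Finset (α × β)) : Prop :=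
  Set.InjOn Prod.fst (N : Set (α × β)) ∧ Set.InjOn Prod.snd (N : Set (α × β))

set_option linter.unusedSectionVars false

namespace CoopDrisko

open Finset

variable {α β : Type*} [DecidableEq α] [DecidableEq β] {n : ℕ}

/-- colors of a colored edge set -/
def colorsOf (S : Finset (Fin n × α × β)) : Finset (Fin n) := S.image Prod.fst
/-- A-side vertices -/
def aOf (S : Finset (Fin n × α × β)) : Finset α := S.image fun p => p.2.1
/-- B-side vertices -/
def bOf (S : Finset (Fin n × α × β)) : Finset β := S.image fun p => p.2.2

/-- Rainbow matching structure: a set of (color, edge) pairs, edges from the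
right classes, distinct colors, and pairwise vertex disjoint. -/
structure IsRB (F : Fin n → Finset (α × β)) (S : Finset (Fin n × α × β)) : Prop where
  mem : ∀ p ∈ S, p.2 ∈ F p.1
  injc : Set.InjOn Prod.fst (S : Set (Fin n × α × β))
  inja : Set.InjOn (fun p : Fin n × α × β => p.2.1) S
  injb : Set.InjOn (fun p : Fin n × α × β => p.2.2) S

variable {F : Fin n → Finset (α × β)}

lemma IsRB.mono {S T : Finset (Fin n × α × β)} (h : T ⊆ S) (hS : IsRB F S) : IsRB F T :=
  ⟨fun p hp => hS.mem p (h hp), hS.injc.mono (by exact_mod_cast h),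
   hS.inja.mono (by exact_mod_cast h), hS.injb.mono (by exact_mod_cast h)⟩

lemma mem_colorsOf {S : Finset (Fin n × α × β)} {c : Fin n} :
    c ∈ colorsOf S ↔ ∃ p ∈ S, p.1 = c := by simp [colorsOf]

lemma mem_aOf {S : Finset (Fin n × α × β)} {x : α} :
    x ∈ aOf S ↔ ∃ p ∈ S, p.2.1 = x := by simp [aOf]

lemma mem_bOf {S : Finset (Fin n × α × β)} {y : β} :
    y ∈ bOf S ↔ ∃ p ∈ S, p.2.2 = y := by simp [bOf]

lemma colorsOf_mono {S T : Finset (Fin n × α × β)} (h : T ⊆ S) : colorsOf T ⊆ colorsOf S :=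
  image_subset_image h
lemma aOf_mono {S T : Finset (Fin n × α × β)} (h : T ⊆ S) : aOf T ⊆ aOf S :=
  image_subset_image h
lemma bOf_mono {S T : Finset (Fin n × α × β)} (h : T ⊆ S) : bOf T ⊆ bOf S :=
  image_subset_image h

lemma colorsOf_insert (S : Finset (Fin n × α × β)) (p : Fin n × α × β) :
    colorsOf (insert p S) = insert p.1 (colorsOf S) := by simp [colorsOf]
lemma aOf_insert (S : Finset (Fin n × α × β)) (p : Fin n × α × β) :
    aOf (insert p S) = insert p.2.1 (aOf S) := by simp [aOf]
lemma bOf_insert (S : Finset (Fin n × α × β)) (p : Fin n × α × β) :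
    bOf (insert p S) = insert p.2.2 (bOf S) := by simp [bOf]

lemma card_bOf {S : Finset (Fin n × α × β)} (hS : IsRB F S) : (bOf S).card = S.card :=
  card_image_of_injOn hS.injb

lemma card_colorsOf {S : Finset (Fin n × α × β)} (hS : IsRB F S) : (colorsOf S).card = S.card :=
  card_image_of_injOn hS.injc

/-- generic: insert preserves injectivity of a projection when the image is new -/
lemma injOn_insert_proj {γ : Type*} (f : Fin n × α × β → γ) {S : Finset (Fin n × α × β)}
    (hS : Set.InjOn f S) {p : Fin n × α × β} (hp : ∀ q ∈ S, f q ≠ f p) :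
    Set.InjOn f ((insert p S : Finset (Fin n × α × β)) : Set (Fin n × α × β)) := by
  intro a ha b hb hab
  simp only [coe_insert, Set.mem_insert_iff, mem_coe] at ha hb
  rcases ha with rfl | ha <;> rcases hb with rfl | hb
  · rfl
  · exact absurd hab.symm (hp b hb)
  · exact absurd hab (hp a ha)
  · exact hS ha hb hab

lemma IsRB.insert {S : Finset (Fin n × α × β)} (hS : IsRB F S) {p : Fin n × α × β}
    (hF : p.2 ∈ F p.1) (h1 : p.1 ∉ colorsOf S) (h2 : p.2.1 ∉ aOf S) (h3 : p.2.2 ∉ bOf S) :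
    IsRB F (insert p S) ∧ (insert p S).card = S.card + 1 := by
  have hpS : p ∉ S := fun h => h1 (mem_colorsOf.mpr ⟨p, h, rfl⟩)
  refine ⟨⟨?_, ?_, ?_, ?_⟩, card_insert_of_notMem hpS⟩
  · intro q hq; rcases mem_insert.mp hq with rfl | hq
    · exact hF
    · exact hS.mem q hq
  · exact injOn_insert_proj _ hS.injc (fun q hq he => h1 (mem_colorsOf.mpr ⟨q, hq, he⟩))
  · exact injOn_insert_proj _ hS.inja (fun q hq he => h2 (mem_aOf.mpr ⟨q, hq, he⟩))
  · exact injOn_insert_proj _ hS.injb (fun q hq he => h3 (mem_bOf.mpr ⟨q, hq, he⟩))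

lemma aOf_erase {S : Finset (Fin n × α × β)} (hS : IsRB F S) {q : Fin n × α × β} (hq : q ∈ S) :
    aOf (S.erase q) = (aOf S).erase q.2.1 := by
  ext x
  simp only [mem_aOf, Finset.mem_erase]
  constructor
  · rintro ⟨p, ⟨hpq, hpS⟩, rfl⟩
    exact ⟨fun he => hpq (hS.inja hpS hq he), ⟨p, hpS, rfl⟩⟩
  · rintro ⟨hne, p, hp, rfl⟩
    refine ⟨p, ⟨?_, hp⟩, rfl⟩
    rintro rfl; exact hne rfl

lemma bOf_erase {S : Finset (Fin n × α × β)} (hS : IsRB F S) {q : Fin n × α × β} (hq : q ∈ S) :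
    bOf (S.erase q) = (bOf S).erase q.2.2 := by
  ext y
  simp only [mem_bOf, Finset.mem_erase]
  constructor
  · rintro ⟨p, ⟨hpq, hpS⟩, rfl⟩
    exact ⟨fun he => hpq (hS.injb hpS hq he), ⟨p, hpS, rfl⟩⟩
  · rintro ⟨hne, p, hp, rfl⟩
    refine ⟨p, ⟨?_, hp⟩, rfl⟩
    rintro rfl; exact hne rfl

end CoopDrisko
-- chain machinery (appended to part1 for testing)
namespace CoopDrisko

open Finset

variable {α β : Type*} [DecidableEq α] [DecidableEq β] {n : ℕ}
variable {F : Fin n → Finset (α × β)}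

/-- An alternating chain relative to rainbow matching `R`, starting (at the top)
from the A-vertex `x`.  Entries are (new color, proposed edge); each entry's
proposed edge ends at a B-vertex matched in `R` whose partner is the previous
A-vertex; the last A-vertex is unmatched. -/
def ChainOk (F : Fin n → Finset (α × β)) (R : Finset (Fin n × α × β)) :
    α → List (Fin n × α × β) → Prop
  | x, [] => x ∉ aOf R
  | x, t :: cs => (∃ c, (c, x, t.2.2) ∈ R) ∧ t.2 ∈ F t.1 ∧ t.1 ∉ colorsOf R ∧
      t.1 ∉ cs.map Prod.fst ∧ t.2.2 ∉ cs.map (fun p => p.2.2) ∧ ChainOk F R t.2.1 cs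

/-- final A-vertex of a chain -/
def endx : List (Fin n × α × β) → α → α
  | [], x => x
  | t :: cs, _ => endx cs t.2.1

lemma endx_not_mem {R : Finset (Fin n × α × β)} :
    ∀ (cs : List (Fin n × α × β)) (x : α), ChainOk F R x cs → endx cs x ∉ aOf R
  | [], x, h => h
  | t :: cs, x, h => endx_not_mem cs t.2.1 h.2.2.2.2.2

lemma chainok_erase {R : Finset (Fin n × α × β)} {q : Fin n × α × β} :
    ∀ (cs : List (Fin n × α × β)) (x : α), ChainOk F R x cs →
      q.2.2 ∉ cs.map (fun p => p.2.2) → ChainOk F (R.erase q) x cs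
  | [], x, h, _ => fun hx => h (aOf_mono (erase_subset q R) hx)
  | t :: cs, x, h, hq => by
      obtain ⟨⟨c, hlink⟩, htF, htc, htd, htz, hrec⟩ := h
      refine ⟨⟨c, mem_erase.mpr ⟨?_, hlink⟩⟩, htF,
        fun hc => htc (colorsOf_mono (erase_subset q R) hc), htd, htz,
        chainok_erase cs t.2.1 hrec (fun hz => hq (by simp [hz]))⟩
      rintro rfl
      exact hq (by simp)

/-- splitting a chain at an entry: we can erase the link edge entering that
entry and keep the prefix a valid chain for the smaller matching. -/
lemma chainok_split {R : Finset (Fin n × α × β)} (hR : IsRB F R) {t : Fin n × α × β}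
    {post : List (Fin n × α × β)} :
    ∀ (pre : List (Fin n × α × β)) (x : α), ChainOk F R x (pre ++ t :: post) →
      ∃ q ∈ R, q.2.2 = t.2.2 ∧ ChainOk F (R.erase q) x pre
  | [], x, h => by
      obtain ⟨⟨c, hlink⟩, _⟩ := h
      refine ⟨(c, x, t.2.2), hlink, rfl, ?_⟩
      intro hx
      rw [aOf_erase hR hlink] at hx
      exact (Finset.mem_erase.mp hx).1 rfl
  | u :: pre, x, h => by
      obtain ⟨⟨c, hlink⟩, huF, huc, hud, huz, hrec⟩ := h
      obtain ⟨q, hqR, hqz, hco⟩ := chainok_split hR pre u.2.1 hrec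
      have huzt : u.2.2 ≠ t.2.2 := by
        intro he; exact huz (by simp [he])
      refine ⟨q, hqR, hqz, ⟨⟨c, mem_erase.mpr ⟨?_, hlink⟩⟩, huF,
        fun hc => huc (colorsOf_mono (erase_subset q R) hc), ?_, ?_, hco⟩⟩
      · rintro rfl
        exact huzt hqz
      · intro hd
        refine hud ?_
        rw [List.append_eq, List.map_append]
        exact List.mem_append_left _ hd
      · intro hz
        refine huz ?_
        rw [List.append_eq, List.map_append]
        exact List.mem_append_left _ hz

/-- The augmenting lemma: given a valid chain from `x₀` and a fresh edge
`(x₀, y)` of a fresh color `χ` with `y` unmatched, swapping along the chain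
yields a rainbow matching one bigger. -/
lemma aug :
    ∀ (cs : List (Fin n × α × β)) (R : Finset (Fin n × α × β)) (x₀ : α) (χ : Fin n) (y : β),
      IsRB F R → ChainOk F R x₀ cs → (x₀, y) ∈ F χ → χ ∉ colorsOf R →
      χ ∉ cs.map Prod.fst → y ∉ bOf R →
      ∃ S : Finset (Fin n × α × β), IsRB F S ∧ S.card = R.card + 1 ∧
        bOf S = insert y (bOf R) ∧ aOf S = insert (endx cs x₀) (aOf R) ∧
        χ ∈ colorsOf S ∧ colorsOf S ⊆ insert χ (colorsOf R ∪ (cs.map Prod.fst).toFinset)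
  | [], R, x₀, χ, y, hR, hco, hxy, hχ, _, hy => by
      have h2 : x₀ ∉ aOf R := hco
      obtain ⟨hS, hcard⟩ := hR.insert (p := (χ, x₀, y)) hxy hχ h2 hy
      refine ⟨insert (χ, x₀, y) R, hS, hcard, by simp [bOf_insert], by simp [aOf_insert, endx],
        by simp [colorsOf_insert], ?_⟩
      rw [colorsOf_insert]
      intro c hc
      rcases mem_insert.mp hc with rfl | hc
      · exact mem_insert_self _ _
      · exact mem_insert_of_mem (mem_union_left _ hc)
  | t :: cs, R, x₀, χ, y, hR, hco, hxy, hχ, hχd, hy => by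
      obtain ⟨⟨c₀, hlink⟩, htF, htc, htd, htz, hrec⟩ := hco
      set q₀ : Fin n × α × β := (c₀, x₀, t.2.2) with hq₀
      set R₁ := R.erase q₀ with hR₁def
      have hR₁ : IsRB F R₁ := hR.mono (erase_subset _ _)
      have hrec₁ : ChainOk F R₁ t.2.1 cs := chainok_erase cs t.2.1 hrec htz
      have htF' : (t.2.1, t.2.2) ∈ F t.1 := by
        have : t.2 = (t.2.1, t.2.2) := rfl
        rwa [this] at htF
      have htzb : t.2.2 ∉ bOf R₁ := by
        rw [hR₁def, bOf_erase hR hlink]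
        simp [hq₀]
      obtain ⟨S₁, hS₁, hc₁, hb₁, ha₁, hχin₁, hcs₁⟩ :=
        aug cs R₁ t.2.1 t.1 t.2.2 hR₁ hrec₁ htF'
          (fun hc => htc (colorsOf_mono (erase_subset _ _) hc)) htd htzb
      -- facts
      have hx₀R : x₀ ∈ aOf R := mem_aOf.mpr ⟨q₀, hlink, rfl⟩
      have hendne : endx cs t.2.1 ∉ aOf R := endx_not_mem cs t.2.1 hrec
      have haR₁ : aOf R₁ = (aOf R).erase x₀ := aOf_erase hR hlink
      have hbR₁ : bOf R₁ = (bOf R).erase t.2.2 := bOf_erase hR hlink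
      have hx₀S₁ : x₀ ∉ aOf S₁ := by
        rw [ha₁, haR₁]
        intro h
        rcases mem_insert.mp h with he | h
        · exact hendne (he ▸ hx₀R)
        · exact (Finset.mem_erase.mp h).1 rfl
      have hyS₁ : y ∉ bOf S₁ := by
        rw [hb₁, hbR₁]
        intro h
        rcases mem_insert.mp h with he | h
        · exact hy (he ▸ mem_bOf.mpr ⟨q₀, hlink, rfl⟩)
        · exact hy (mem_of_mem_erase h)
      have hχS₁ : χ ∉ colorsOf S₁ := by
        intro h
        have := hcs₁ h
        rcases mem_insert.mp this with he | h2
        · exact hχd (by simp [he])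
        · rcases mem_union.mp h2 with h3 | h3
          · exact hχ (colorsOf_mono (erase_subset _ _) h3)
          · refine hχd ?_
            simp only [List.map_cons, List.mem_cons]
            exact Or.inr (List.mem_toFinset.mp h3)
      obtain ⟨hS, hcard⟩ := hS₁.insert (p := (χ, x₀, y)) hxy hχS₁ hx₀S₁ hyS₁
      have hRpos : 1 ≤ R.card := card_pos.mpr ⟨q₀, hlink⟩
      have hR₁card : R₁.card = R.card - 1 := card_erase_of_mem hlink
      refine ⟨insert (χ, x₀, y) S₁, hS, by rw [hcard, hc₁, hR₁card]; omega, ?_, ?_, ?_, ?_⟩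
      · rw [bOf_insert, hb₁, hbR₁, Finset.insert_erase (mem_bOf.mpr ⟨q₀, hlink, rfl⟩)]
      · rw [aOf_insert, ha₁, haR₁]
        show insert x₀ (insert (endx cs t.2.1) ((aOf R).erase x₀)) = insert (endx (t::cs) x₀) (aOf R)
        rw [Finset.insert_comm, Finset.insert_erase hx₀R]
        rfl
      · rw [colorsOf_insert]; exact mem_insert_self _ _
      · rw [colorsOf_insert]
        intro c hc
        rcases mem_insert.mp hc with rfl | hc
        · exact mem_insert_self _ _
        · have := hcs₁ hc
          rcases mem_insert.mp this with rfl | h2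
          · refine mem_insert_of_mem (mem_union_right _ ?_)
            simp
          · rcases mem_union.mp h2 with h3 | h3
            · exact mem_insert_of_mem (mem_union_left _ (colorsOf_mono (erase_subset _ _) h3))
            · refine mem_insert_of_mem (mem_union_right _ ?_)
              simp only [List.mem_toFinset, List.map_cons, List.mem_cons] at h3 ⊢
              exact Or.inr h3

end CoopDrisko
namespace CoopDrisko

open Finset

variable {α β : Type*} [DecidableEq α] [DecidableEq β] {n : ℕ}
variable {F : Fin n → Finset (α × β)}

/-- A valid partial configuration (alternating forest), stored most-recent-first. -/
def Wf (F : Fin n → Finset (α × β)) (R : Finset (Fin n × α × β)) :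
    List (Fin n × α × β) → Prop
  | [] => True
  | t :: rest => Wf F R rest ∧ t.2.2 ∈ bOf R ∧ t.2.2 ∉ rest.map (fun p => p.2.2) ∧
      t.1 ∉ colorsOf R ∧ t.1 ∉ rest.map Prod.fst ∧ t.2 ∈ F t.1 ∧
      (t.2.1 ∉ aOf R ∨ ∃ q ∈ R, q.2.1 = t.2.1 ∧ q.2.2 ∈ rest.map (fun p => p.2.2))

lemma wf_znodup {R : Finset (Fin n × α × β)} :
    ∀ L : List (Fin n × α × β), Wf F R L → (L.map (fun p => p.2.2)).Nodup
  | [], _ => List.nodup_nil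
  | t :: rest, h => by
      simp only [List.map_cons, List.nodup_cons]
      exact ⟨h.2.2.1, wf_znodup rest h.1⟩

lemma wf_zsubset {R : Finset (Fin n × α × β)} :
    ∀ L : List (Fin n × α × β), Wf F R L → ∀ z ∈ L.map (fun p => p.2.2), z ∈ bOf R
  | t :: rest, h, z, hz => by
      rcases List.mem_cons.mp hz with rfl | hz
      · exact h.2.1
      · exact wf_zsubset rest h.1 z hz

/-- extract an alternating chain from a configuration, starting at the partner
of a matched B-vertex appearing in the configuration. -/
lemma extract {R : Finset (Fin n × α × β)} :
    ∀ (L : List (Fin n × α × β)), Wf F R L → ∀ (x : α) (z : β), (∃ c, (c, x, z) ∈ R) →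
      z ∈ L.map (fun p => p.2.2) →
      ∃ cs, ChainOk F R x cs ∧ cs ≠ [] ∧
        (∀ d ∈ cs.map Prod.fst, d ∈ L.map Prod.fst) ∧
        (∀ w ∈ cs.map (fun p => p.2.2), w ∈ L.map (fun p => p.2.2))
  | t :: rest, h, x, z, hlink, hz => by
      obtain ⟨hwf, hzb, hznd, hcR, hdnd, htF, hbase⟩ := h
      rcases List.mem_cons.mp hz with rfl | hz
      · -- z is the entry t
        rcases hbase with hfree | ⟨q, hqR, hq1, hq2⟩
        · refine ⟨[t], ⟨hlink, htF, hcR, by simp, by simp, hfree⟩, by simp, ?_, ?_⟩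
          · intro d hd; simp only [List.map_cons, List.mem_cons]
            simp only [List.map_cons, List.mem_cons] at hd
            rcases hd with rfl | hd
            · exact Or.inl rfl
            · simp at hd
          · intro w hw; simp only [List.map_cons, List.mem_cons]
            simp only [List.map_cons, List.mem_cons] at hw
            rcases hw with rfl | hw
            · exact Or.inl rfl
            · simp at hw
        · obtain ⟨cs', hco', _, hds', hzs'⟩ :=
            extract rest hwf t.2.1 q.2.2 ⟨q.1, by rw [← hq1]; exact hqR⟩ hq2
          refine ⟨t :: cs', ⟨hlink, htF, hcR, ?_, ?_, hco'⟩, by simp, ?_, ?_⟩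
          · intro hd; exact hdnd (hds' t.1 hd)
          · intro hzz; exact hznd (hzs' t.2.2 hzz)
          · intro d hd
            simp only [List.map_cons, List.mem_cons] at hd ⊢
            rcases hd with rfl | hd
            · exact Or.inl rfl
            · exact Or.inr (hds' d hd)
          · intro w hw
            simp only [List.map_cons, List.mem_cons] at hw ⊢
            rcases hw with rfl | hw
            · exact Or.inl rfl
            · exact Or.inr (hzs' w hw)
      · obtain ⟨cs, hco, hne, hds, hzs⟩ := extract rest hwf x z hlink hz
        refine ⟨cs, hco, hne, ?_, ?_⟩
        · intro d hd
          simp only [List.map_cons, List.mem_cons]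
          exact Or.inr (hds d hd)
        · intro w hw
          simp only [List.map_cons, List.mem_cons]
          exact Or.inr (hzs w hw)

/-- a valid chain is itself a valid configuration -/
lemma chainok_to_wf {R : Finset (Fin n × α × β)} :
    ∀ (cs : List (Fin n × α × β)) (x : α), ChainOk F R x cs → Wf F R cs
  | [], _, _ => trivial
  | t :: cs, x, h => by
      obtain ⟨⟨c, hlink⟩, htF, htc, htd, htz, hrec⟩ := h
      refine ⟨chainok_to_wf cs t.2.1 hrec, mem_bOf.mpr ⟨(c, x, t.2.2), hlink, rfl⟩,
        htz, htc, htd, htF, ?_⟩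
      cases cs with
      | nil => exact Or.inl hrec
      | cons u cs' =>
          obtain ⟨⟨c', hlink'⟩, _⟩ := hrec
          exact Or.inr ⟨(c', t.2.1, u.2.2), hlink', rfl, by simp⟩

/-- starting from any "reachable" A-vertex, a fresh edge to a free B-vertex of a
fresh color contradicts maximality. -/
lemma augFromY {R : Finset (Fin n × α × β)} {L : List (Fin n × α × β)}
    (hR : IsRB F R) (hmax : ∀ S, IsRB F S → S.card ≤ R.card) (hwf : Wf F R L)
    {χ : Fin n} {x : α} {y : β} (hxyF : (x, y) ∈ F χ) (hχR : χ ∉ colorsOf R)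
    (hχL : χ ∉ L.map Prod.fst) (hy : y ∉ bOf R)
    (hx : x ∉ aOf R ∨ ∃ q ∈ R, q.2.1 = x ∧ q.2.2 ∈ L.map (fun p => p.2.2)) : False := by
  rcases hx with hfree | ⟨q, hqR, hq1, hq2⟩
  · obtain ⟨S, hS, hc, _⟩ := aug [] R x χ y hR hfree hxyF hχR (by simp) hy
    have := hmax S hS
    omega
  · obtain ⟨cs, hco, _, hds, _⟩ :=
      extract L hwf x q.2.2 ⟨q.1, by rw [← hq1]; exact hqR⟩ hq2
    obtain ⟨S, hS, hc, _⟩ := aug cs R x χ y hR hco hxyF hχR (fun h => hχL (hds χ h)) hy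
    have := hmax S hS
    omega

end CoopDrisko
namespace CoopDrisko

open Finset

variable {α β : Type*} [DecidableEq α] [DecidableEq β]

/-- Core growth lemma: any valid configuration extends to one covering all of
`bOf R` (else we would contradict maximality of `R`). -/
lemma growAux {k : ℕ} {F : Fin (2*k-1) → Finset (α × β)}
    (hpair' : ∀ i j : Fin (2*k-1), i ≠ j →
      ∃ N : Finset (α × β), N ⊆ F i ∪ F j ∧ IsBipMatching N ∧ N.card = k)
    {R : Finset (Fin (2*k-1) × α × β)} (hR : IsRB F R)
    (hmax : ∀ S, IsRB F S → S.card ≤ R.card) (hcard : R.card + 1 ≤ k) :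
    ∀ (d : ℕ) (L : List (Fin (2*k-1) × α × β)), Wf F R L →
      (bOf R).card ≤ (L.map (fun p => p.2.2)).toFinset.card + d →
      ∃ Lf, Wf F R Lf ∧ (∃ pre, Lf = pre ++ L) ∧
        ((Lf.map (fun p => p.2.2)).toFinset = bOf R) := by
  intro d
  induction d with
  | zero =>
      intro L hwf hle
      refine ⟨L, hwf, ⟨[], rfl⟩, ?_⟩
      apply Finset.eq_of_subset_of_card_le
      · intro z hz
        exact wf_zsubset L hwf z (List.mem_toFinset.mp hz)
      · simpa using hle
  | succ d ih =>
      intro L hwf hle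
      classical
      by_cases heq : ((L.map (fun p => p.2.2)).toFinset = bOf R)
      · exact ⟨L, hwf, ⟨[], rfl⟩, heq⟩
      -- we produce a new entry
      set zsF := (L.map (fun p => p.2.2)).toFinset with hzsF
      have hsub : zsF ⊆ bOf R := fun z hz => wf_zsubset L hwf z (List.mem_toFinset.mp hz)
      have hzlt : zsF.card < (bOf R).card := by
        rcases lt_or_eq_of_le (card_le_card hsub) with h | h
        · exact h
        · exact absurd (Finset.eq_of_subset_of_card_le hsub (le_of_eq h.symm)) heq
      have hlen : zsF.card = L.length := by
        rw [hzsF, List.toFinset_card_of_nodup (wf_znodup L hwf), List.length_map]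
      have hbcard : (bOf R).card = R.card := card_bOf hR
      -- two clean colors
      set Cln := (Finset.univ : Finset (Fin (2*k-1))) \
        (colorsOf R ∪ (L.map Prod.fst).toFinset) with hCln
      have hClncard : 2 ≤ Cln.card := by
        have h1 : (colorsOf R ∪ (L.map Prod.fst).toFinset).card ≤
            R.card + zsF.card := by
          calc (colorsOf R ∪ (L.map Prod.fst).toFinset).card
              ≤ (colorsOf R).card + ((L.map Prod.fst).toFinset).card := card_union_le _ _
            _ ≤ R.card + zsF.card := by
                have := List.toFinset_card_le (L.map Prod.fst)
                have h2 : (colorsOf R).card = R.card := card_colorsOf hR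
                simp only [List.length_map] at this
                omega
        have h3 : Cln.card = (2*k-1) -
            (colorsOf R ∪ (L.map Prod.fst).toFinset).card := by
          rw [hCln, card_sdiff_of_subset (subset_univ _)]
          simp
        omega
      obtain ⟨d₁, hd₁, d₂, hd₂, hd12⟩ := Finset.one_lt_card.mp (by omega : 1 < Cln.card)
      have hd₁R : d₁ ∉ colorsOf R := fun h => (mem_sdiff.mp hd₁).2 (mem_union_left _ h)
      have hd₁L : d₁ ∉ L.map Prod.fst :=
        fun h => (mem_sdiff.mp hd₁).2 (mem_union_right _ (List.mem_toFinset.mpr h))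
      have hd₂R : d₂ ∉ colorsOf R := fun h => (mem_sdiff.mp hd₂).2 (mem_union_left _ h)
      have hd₂L : d₂ ∉ L.map Prod.fst :=
        fun h => (mem_sdiff.mp hd₂).2 (mem_union_right _ (List.mem_toFinset.mpr h))
      obtain ⟨N, hNsub, hNm, hNc⟩ := hpair' d₁ d₂ hd12
      -- split N according to reachability of the A-endpoint
      set Ypred : α × β → Prop := fun p =>
        p.1 ∉ aOf R ∨ ∃ q ∈ R, q.2.1 = p.1 ∧ q.2.2 ∈ zsF with hYpred
      set Good := N.filter Ypred with hGood
      set Bad := N.filter (fun p => ¬ Ypred p) with hBad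
      have hsplit : Good.card + Bad.card = N.card := card_filter_add_card_filter_not _
      -- Bad is small
      have hBadcard : Bad.card ≤ (bOf R).card - zsF.card := by
        have hb2 : Bad.card ≤ (bOf R \ zsF).card := by
          apply Finset.card_le_card_of_injOn
            (fun p => if h : ∃ q ∈ R, q.2.1 = p.1 then h.choose.2.2 else p.2)
          · intro p hp
            obtain ⟨hpN, hnY⟩ := mem_filter.mp hp
            rw [hYpred] at hnY
            have hpa : p.1 ∈ aOf R := by
              by_contra h; exact hnY (Or.inl h)
            have hq : ∀ q ∈ R, q.2.1 = p.1 → q.2.2 ∉ zsF :=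
              fun q hq1 hq2 hz => hnY (Or.inr ⟨q, hq1, hq2, hz⟩)
            have hex : ∃ q ∈ R, q.2.1 = p.1 := by
              obtain ⟨q, hq1, hq2⟩ := mem_aOf.mp hpa
              exact ⟨q, hq1, hq2⟩
            simp only [dif_pos hex]
            obtain ⟨hq1, hq2⟩ := hex.choose_spec
            exact mem_sdiff.mpr ⟨mem_bOf.mpr ⟨hex.choose, hq1, rfl⟩, hq hex.choose hq1 hq2⟩
          · intro p hp p' hp' hff
            obtain ⟨hpN, hnY⟩ := mem_filter.mp (Finset.mem_coe.mp hp)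
            obtain ⟨hpN', hnY'⟩ := mem_filter.mp (Finset.mem_coe.mp hp')
            rw [hYpred] at hnY hnY'
            have hpa : p.1 ∈ aOf R := by by_contra h; exact hnY (Or.inl h)
            have hpa' : p'.1 ∈ aOf R := by by_contra h; exact hnY' (Or.inl h)
            have hex : ∃ q ∈ R, q.2.1 = p.1 := by
              obtain ⟨q, hq1, hq2⟩ := mem_aOf.mp hpa; exact ⟨q, hq1, hq2⟩
            have hex' : ∃ q ∈ R, q.2.1 = p'.1 := by
              obtain ⟨q, hq1, hq2⟩ := mem_aOf.mp hpa'; exact ⟨q, hq1, hq2⟩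
            simp only [dif_pos hex, dif_pos hex'] at hff
            obtain ⟨hq1, hq2⟩ := hex.choose_spec
            obtain ⟨hq1', hq2'⟩ := hex'.choose_spec
            have hqq := hR.injb hq1 hq1' hff
            have hpp : p.1 = p'.1 := by rw [← hq2, ← hq2', hqq]
            exact hNm.1 (Finset.mem_coe.mpr hpN) (Finset.mem_coe.mpr hpN') hpp
        have hb3 : (bOf R \ zsF).card = (bOf R).card - zsF.card := card_sdiff_of_subset hsub
        omega
      have hGoodcard : zsF.card + 1 ≤ Good.card := by omega
      by_cases hcase : ∃ p ∈ Good, p.2 ∉ bOf R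
      · -- augmenting: contradiction with maximality
        exfalso
        obtain ⟨p, hpG, hpb⟩ := hcase
        obtain ⟨hpN, hpY⟩ := mem_filter.mp hpG
        have hpun : p ∈ F d₁ ∪ F d₂ := hNsub hpN
        have hYor : p.1 ∉ aOf R ∨ ∃ q ∈ R, q.2.1 = p.1 ∧
            q.2.2 ∈ L.map (fun p => p.2.2) := by
          rw [hYpred] at hpY
          rcases hpY with h | ⟨q, hq, hq1, hq2⟩
          · exact Or.inl h
          · exact Or.inr ⟨q, hq, hq1, List.mem_toFinset.mp hq2⟩
        rcases mem_union.mp hpun with h1 | h1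
        · exact augFromY hR hmax hwf (χ := d₁) (x := p.1) (y := p.2)
            (by simpa using h1) hd₁R hd₁L hpb hYor
        · exact augFromY hR hmax hwf (χ := d₂) (x := p.1) (y := p.2)
            (by simpa using h1) hd₂R hd₂L hpb hYor
      · push_neg at hcase
        by_cases hcase2 : ∃ p ∈ Good, p.2 ∉ zsF
        · -- extension step
          obtain ⟨p, hpG, hpz⟩ := hcase2
          obtain ⟨hpN, hpY⟩ := mem_filter.mp hpG
          have hpun : p ∈ F d₁ ∪ F d₂ := hNsub hpN
          have key : ∀ χp : Fin (2*k-1), p ∈ F χp → χp ∉ colorsOf R →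
              χp ∉ L.map Prod.fst →
              ∃ Lf, Wf F R Lf ∧ (∃ pre, Lf = pre ++ L) ∧
                ((Lf.map (fun p => p.2.2)).toFinset = bOf R) := by
            intro χp hpF hχpR hχpL
            have hwf' : Wf F R ((χp, p.1, p.2) :: L) := by
              refine ⟨hwf, ?_, ?_, hχpR, hχpL, by simpa using hpF, ?_⟩
              · exact hcase p hpG
              · exact fun h => hpz (List.mem_toFinset.mpr h)
              · rw [hYpred] at hpY
                rcases hpY with h | ⟨q, hq, hq1, hq2⟩
                · exact Or.inl h
                · exact Or.inr ⟨q, hq, hq1, List.mem_toFinset.mp hq2⟩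
            have hcardL' : (bOf R).card ≤
                ((((χp, p.1, p.2) :: L).map (fun p => p.2.2)).toFinset).card + d := by
              have hins : (((χp, p.1, p.2) :: L).map (fun p => p.2.2)).toFinset
                  = insert p.2 zsF := by simp [hzsF]
              rw [hins, card_insert_of_notMem hpz]
              omega
            obtain ⟨Lf, hwfL, ⟨pre, hpre⟩, hfull⟩ := ih ((χp, p.1, p.2) :: L) hwf' hcardL'
            exact ⟨Lf, hwfL, ⟨pre ++ [(χp, p.1, p.2)], by rw [hpre]; simp⟩, hfull⟩
          rcases mem_union.mp hpun with h1 | h1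
          · exact key d₁ h1 hd₁R hd₁L
          · exact key d₂ h1 hd₂R hd₂L
        · -- impossible: too many Good edges land in zsF
          exfalso
          push_neg at hcase2
          have himg : Good.image Prod.snd ⊆ zsF := by
            intro z hz
            obtain ⟨p, hp, rfl⟩ := mem_image.mp hz
            exact hcase2 p hp
          have hinj : (Good.image Prod.snd).card = Good.card := by
            apply card_image_of_injOn
            exact hNm.2.mono (by intro p hp; exact mem_coe.mpr (mem_filter.mp (mem_coe.mp hp)).1)
          have := card_le_card himg
          omega

end CoopDrisko
namespace CoopDrisko

open Finset

variable {α β : Type*} [DecidableEq α] [DecidableEq β]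

/-- if a color is clean relative to a full configuration, then all edges of its
class end at matched B-vertices. -/
lemma noFreeB {n : ℕ} {F : Fin n → Finset (α × β)}
    {R : Finset (Fin n × α × β)} {L : List (Fin n × α × β)} (hR : IsRB F R)
    (hmax : ∀ S, IsRB F S → S.card ≤ R.card) (hwf : Wf F R L)
    (hfull : (L.map (fun p => p.2.2)).toFinset = bOf R)
    {t : Fin n} (ht1 : t ∉ colorsOf R) (ht2 : t ∉ L.map Prod.fst) :
    ∀ e ∈ F t, e.2 ∈ bOf R := by
  intro e he
  by_contra hy
  refine augFromY hR hmax hwf (χ := t) (x := e.1) (y := e.2) (by simpa using he) ht1 ht2 hy ?_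
  by_cases hx : e.1 ∈ aOf R
  · obtain ⟨q, hq, hq1⟩ := mem_aOf.mp hx
    have hqz : q.2.2 ∈ (L.map (fun p => p.2.2)).toFinset := by
      rw [hfull]; exact mem_bOf.mpr ⟨q, hq, rfl⟩
    exact Or.inr ⟨q, hq, hq1, List.mem_toFinset.mp hqz⟩
  · exact Or.inl hx

lemma isRB_empty {n : ℕ} {F : Fin n → Finset (α × β)} : IsRB F (∅ : Finset (Fin n × α × β)) := by
  refine ⟨fun p hp => absurd hp (by simp), ?_, ?_, ?_⟩ <;>
    · intro a ha; simp at ha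

/-- packaging: the statement-level conclusion from a rainbow structure of size k -/
lemma package {k : ℕ} {F : Fin (2*k-1) → Finset (α × β)} (hk : 1 ≤ k)
    {S : Finset (Fin (2*k-1) × α × β)} (hS : IsRB F S) (hcard : S.card = k) :
    ∃ (I : Finset (Fin (2 * k - 1))) (e : Fin (2 * k - 1) → α × β),
      I.card = k ∧ Set.InjOn e ↑I ∧ (∀ i ∈ I, e i ∈ F i) ∧ IsBipMatching (I.image e) := by
  classical
  have hSne : S.Nonempty := by rw [← Finset.card_pos, hcard]; omega
  set junk : α × β := hSne.choose.2 with hjunk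
  set I := S.image Prod.fst with hI
  set e : Fin (2*k-1) → α × β :=
    fun i => if h : ∃ p, p ∈ S ∧ p.1 = i then h.choose.2 else junk with he
  have hkey : ∀ i ∈ I, (i, e i) ∈ S := by
    intro i hi
    obtain ⟨p, hp, hpi⟩ := mem_image.mp hi
    have h : ∃ p, p ∈ S ∧ p.1 = i := ⟨p, hp, hpi⟩
    have hc := h.choose_spec
    have heq : (i, e i) = h.choose := by
      have h2 : e i = h.choose.2 := by rw [he]; simp only [dif_pos h]
      rw [h2]
      exact Prod.ext hc.2.symm rfl
    rw [heq]; exact hc.1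
  refine ⟨I, e, ?_, ?_, ?_, ?_, ?_⟩
  · rw [hI, card_image_of_injOn hS.injc, hcard]
  · intro i hi j hj hij
    have hpi := hkey i (mem_coe.mp hi)
    have hpj := hkey j (mem_coe.mp hj)
    have : (i, e i) = (j, e j) := hS.injb hpi hpj (by simp [hij])
    exact (Prod.mk.injEq _ _ _ _).mp this |>.1
  · intro i hi
    exact hS.mem _ (hkey i hi)
  · -- InjOn fst on image
    intro u hu v hv huv
    obtain ⟨i, hi, hiu⟩ := mem_image.mp (mem_coe.mp hu)
    obtain ⟨j, hj, hjv⟩ := mem_image.mp (mem_coe.mp hv)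
    subst hiu; subst hjv
    have hpi := hkey i hi
    have hpj := hkey j hj
    have : (i, e i) = (j, e j) := hS.inja hpi hpj (by simpa using huv)
    exact congrArg Prod.snd this
  · -- InjOn snd on image
    intro u hu v hv huv
    obtain ⟨i, hi, hiu⟩ := mem_image.mp (mem_coe.mp hu)
    obtain ⟨j, hj, hjv⟩ := mem_image.mp (mem_coe.mp hv)
    subst hiu; subst hjv
    have hpi := hkey i hi
    have hpj := hkey j hj
    have : (i, e i) = (j, e j) := hS.injb hpi hpj (by simpa using huv)
    exact congrArg Prod.snd this

end CoopDrisko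
section
open Finset CoopDrisko

/-- Cooperative Drisko: if the edge set of a bipartite graph is partitioned
into `2k-1` nonempty sets such that the union of every two of them contains a
matching of size `k`, then there is a rainbow matching of size `k`. -/
theorem cooperative_drisko {α β : Type*} [DecidableEq α] [DecidableEq β]
    {k : ℕ} (F : Fin (2 * k - 1) → Finset (α × β))
    (hne : ∀ i, (F i).Nonempty)
    (hdisj : ∀ i j, i ≠ j → Disjoint (F i) (F j))
    (hpair : ∀ i j, i < j →
      ∃ N : Finset (α × β), N ⊆ F i ∪ F j ∧ IsBipMatching N ∧ N.card = k) :
    ∃ (I : Finset (Fin (2 * k - 1))) (e : Fin (2 * k - 1) → α × β),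
      I.card = k ∧ Set.InjOn e ↑I ∧ (∀ i ∈ I, e i ∈ F i) ∧
      IsBipMatching (I.image e) := by
  classical
  rcases Nat.eq_zero_or_pos k with rfl | hk
  · refine ⟨∅, fun i => i.elim0, by simp, by simp, by simp, ?_, ?_⟩ <;>
      · intro a ha; simp at ha
  -- symmetrized pair hypothesis
  have hpair' : ∀ i j : Fin (2*k-1), i ≠ j →
      ∃ N : Finset (α × β), N ⊆ F i ∪ F j ∧ IsBipMatching N ∧ N.card = k := by
    intro i j hij
    rcases lt_or_gt_of_ne hij with h | h
    · exact hpair i j h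
    · obtain ⟨N, h1, h2, h3⟩ := hpair j i h
      exact ⟨N, by rwa [Finset.union_comm], h2, h3⟩
  -- a maximum rainbow structure
  obtain ⟨R, hR, hmax⟩ : ∃ R : Finset (Fin (2*k-1) × α × β),
      IsRB F R ∧ ∀ S, IsRB F S → S.card ≤ R.card := by
    set cand := (((Finset.univ : Finset (Fin (2*k-1))) ×ˢ
      (Finset.univ.biUnion F)).powerset).filter (fun S => IsRB F S) with hcand
    have hne' : cand.Nonempty := by
      refine ⟨∅, mem_filter.mpr ⟨by simp, isRB_empty⟩⟩
    obtain ⟨R, hRc, hRmax⟩ := Finset.exists_max_image cand Finset.card hne'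
    refine ⟨R, (mem_filter.mp hRc).2, ?_⟩
    intro S hS
    apply hRmax
    refine mem_filter.mpr ⟨mem_powerset.mpr ?_, hS⟩
    intro p hp
    exact mem_product.mpr ⟨mem_univ _, mem_biUnion.mpr ⟨p.1, mem_univ _, hS.mem p hp⟩⟩
  rcases le_or_gt k R.card with hge | hlt
  · -- extract a size-k sub-rainbow and conclude
    obtain ⟨S, hsub, hScard⟩ := Finset.exists_subset_card_eq hge
    exact package hk (hR.mono hsub) hScard
  -- the contradiction branch
  exfalso
  have hmle : R.card + 1 ≤ k := hlt
  -- full configuration over R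
  obtain ⟨L, hwfL, -, hfullL⟩ :=
    growAux hpair' hR hmax hmle ((bOf R).card) [] trivial (by simp)
  have hLlen : L.length = R.card := by
    have h1 := List.toFinset_card_of_nodup (wf_znodup L hwfL)
    rw [hfullL, card_bOf hR, List.length_map] at h1
    omega
  -- Lemma A
  have lemA : ∀ t₁ t₂ : Fin (2*k-1), t₁ ≠ t₂ → (∀ e ∈ F t₁, e.2 ∈ bOf R) →
      (∀ e ∈ F t₂, e.2 ∈ bOf R) → False := by
    intro t₁ t₂ h12 hA hB
    obtain ⟨N, hNsub, hNm, hNc⟩ := hpair' t₁ t₂ h12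
    have himg : N.image Prod.snd ⊆ bOf R := by
      intro z hz
      obtain ⟨p, hp, rfl⟩ := mem_image.mp hz
      rcases mem_union.mp (hNsub hp) with h | h
      · exact hA p h
      · exact hB p h
    have himgc : (N.image Prod.snd).card = k := by
      rw [card_image_of_injOn hNm.2, hNc]
    have hle := card_le_card himg
    rw [himgc, card_bOf hR] at hle
    omega
  -- count of used colors
  have hcolR : (colorsOf R).card = R.card := card_colorsOf hR
  have hdsLcard : ((L.map Prod.fst).toFinset).card ≤ R.card := by
    have := List.toFinset_card_le (L.map Prod.fst)
    simp only [List.length_map] at this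
    omega
  rcases Nat.lt_or_ge R.card (k-1) with hm | hm
  · -- R.card ≤ k - 2 : two clean colors
    have hclncard : 2 ≤ ((Finset.univ : Finset (Fin (2*k-1))) \
        (colorsOf R ∪ (L.map Prod.fst).toFinset)).card := by
      have hcup : (colorsOf R ∪ (L.map Prod.fst).toFinset).card ≤ 2 * R.card := by
        have := card_union_le (colorsOf R) ((L.map Prod.fst).toFinset)
        omega
      rw [card_sdiff_of_subset (subset_univ _)]
      have : ((Finset.univ : Finset (Fin (2*k-1)))).card = 2*k-1 := by simp
      omega
    obtain ⟨t₁, h1, t₂, h2, h12⟩ := Finset.one_lt_card.mp (lt_of_lt_of_le one_lt_two hclncard)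
    have hA := noFreeB hR hmax hwfL hfullL
      (t := t₁) (fun h => (mem_sdiff.mp h1).2 (mem_union_left _ h))
      (fun h => (mem_sdiff.mp h1).2 (mem_union_right _ (List.mem_toFinset.mpr h)))
    have hB := noFreeB hR hmax hwfL hfullL
      (t := t₂) (fun h => (mem_sdiff.mp h2).2 (mem_union_left _ h))
      (fun h => (mem_sdiff.mp h2).2 (mem_union_right _ (List.mem_toFinset.mpr h)))
    exact lemA t₁ t₂ h12 hA hB
  · -- endgame: R.card = k - 1
    have hmeq : R.card = k - 1 := by omega
    -- the clean color d*
    have hclncard : 1 ≤ ((Finset.univ : Finset (Fin (2*k-1))) \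
        (colorsOf R ∪ (L.map Prod.fst).toFinset)).card := by
      have hcup : (colorsOf R ∪ (L.map Prod.fst).toFinset).card ≤ 2 * R.card := by
        have := card_union_le (colorsOf R) ((L.map Prod.fst).toFinset)
        omega
      rw [card_sdiff_of_subset (subset_univ _)]
      have : ((Finset.univ : Finset (Fin (2*k-1)))).card = 2*k-1 := by simp
      omega
    obtain ⟨dstar, hdstar⟩ := Finset.card_pos.mp (lt_of_lt_of_le zero_lt_one hclncard)
    have hdR : dstar ∉ colorsOf R := fun h => (mem_sdiff.mp hdstar).2 (mem_union_left _ h)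
    have hdL : dstar ∉ L.map Prod.fst :=
      fun h => (mem_sdiff.mp hdstar).2 (mem_union_right _ (List.mem_toFinset.mpr h))
    have hdfree : ∀ e ∈ F dstar, e.2 ∈ bOf R := noFreeB hR hmax hwfL hfullL hdR hdL
    obtain ⟨ed, hed⟩ := hne dstar
    have hz₁ : ed.2 ∈ bOf R := hdfree ed hed
    -- common final blow: given a full config over R whose colors include d*,
    -- we find a second no-free-B color and finish via lemA
    have seedFinish : ∀ L₂ : List (Fin (2*k-1) × α × β), Wf F R L₂ →
        ((L₂.map (fun p => p.2.2)).toFinset = bOf R) → dstar ∈ L₂.map Prod.fst → False := by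
      intro L₂ hwf₂ hfull₂ hdin₂
      have hL₂len : L₂.length = R.card := by
        have h1 := List.toFinset_card_of_nodup (wf_znodup L₂ hwf₂)
        rw [hfull₂, card_bOf hR, List.length_map] at h1
        omega
      have hds₂ : ((L₂.map Prod.fst).toFinset).card ≤ R.card := by
        have := List.toFinset_card_le (L₂.map Prod.fst)
        simp only [List.length_map] at this
        omega
      have hclncard₂ : 1 ≤ ((Finset.univ : Finset (Fin (2*k-1))) \
          (colorsOf R ∪ (L₂.map Prod.fst).toFinset)).card := by
        have hcup : (colorsOf R ∪ (L₂.map Prod.fst).toFinset).card ≤ 2 * R.card := by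
          have := card_union_le (colorsOf R) ((L₂.map Prod.fst).toFinset)
          omega
        rw [card_sdiff_of_subset (subset_univ _)]
        have : ((Finset.univ : Finset (Fin (2*k-1)))).card = 2*k-1 := by simp
        omega
      obtain ⟨t₂, ht₂⟩ := Finset.card_pos.mp (lt_of_lt_of_le zero_lt_one hclncard₂)
      have ht₂R : t₂ ∉ colorsOf R := fun h => (mem_sdiff.mp ht₂).2 (mem_union_left _ h)
      have ht₂L : t₂ ∉ L₂.map Prod.fst :=
        fun h => (mem_sdiff.mp ht₂).2 (mem_union_right _ (List.mem_toFinset.mpr h))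
      have ht₂ne : dstar ≠ t₂ := by
        rintro rfl; exact ht₂L hdin₂
      exact lemA dstar t₂ ht₂ne hdfree (noFreeB hR hmax hwf₂ hfull₂ ht₂R ht₂L)
    by_cases hx₁ : ed.1 ∈ aOf R
    · -- ed.1 is matched; extract a chain
      obtain ⟨q, hq, hq1⟩ := mem_aOf.mp hx₁
      have hqz : q.2.2 ∈ L.map (fun p => p.2.2) := by
        apply List.mem_toFinset.mp
        rw [hfullL]
        exact mem_bOf.mpr ⟨q, hq, rfl⟩
      obtain ⟨cs, hco, hcsne, hds, hzs⟩ :=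
        extract L hwfL ed.1 q.2.2 ⟨q.1, by rw [← hq1]; exact hq⟩ hqz
      by_cases hz1cs : ed.2 ∈ cs.map (fun p => p.2.2)
      · -- rotation case
        obtain ⟨t, htcs, htz⟩ := List.mem_map.mp hz1cs
        obtain ⟨pre, post, hsplitcs⟩ := List.append_of_mem htcs
        rw [hsplitcs] at hco
        obtain ⟨q₀, hq₀R, hq₀z, hco₀⟩ := chainok_split hR pre ed.1 hco
        have hR₀ : IsRB F (R.erase q₀) := hR.mono (erase_subset _ _)
        have hq₀z₁ : q₀.2.2 = ed.2 := by rw [hq₀z]; exact htz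
        have hz₁R₀ : ed.2 ∉ bOf (R.erase q₀) := by
          rw [bOf_erase hR hq₀R, hq₀z₁]
          simp
        have hdR₀ : dstar ∉ colorsOf (R.erase q₀) :=
          fun h => hdR (colorsOf_mono (erase_subset _ _) h)
        have hdpre : dstar ∉ pre.map Prod.fst := by
          intro h
          refine hdL (hds dstar ?_)
          rw [hsplitcs, List.map_append]
          exact List.mem_append_left _ h
        obtain ⟨R', hR', hR'c, hR'b, -, hdin', -⟩ :=
          aug pre (R.erase q₀) ed.1 dstar ed.2 hR₀ hco₀ (by simpa using hed) hdR₀ hdpre hz₁R₀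
        have hbR' : bOf R' = bOf R := by
          rw [hR'b, bOf_erase hR hq₀R, hq₀z₁, insert_erase hz₁]
        have hcR' : R'.card = R.card := by
          rw [hR'c, card_erase_of_mem hq₀R]
          have := Finset.card_pos.mpr ⟨q₀, hq₀R⟩
          omega
        have hmax' : ∀ S, IsRB F S → S.card ≤ R'.card := by
          intro S hS; rw [hcR']; exact hmax S hS
        obtain ⟨L₃, hwf₃, -, hfull₃⟩ :=
          growAux hpair' hR' hmax' (by omega) ((bOf R').card) [] trivial (by simp)
        have hL₃len : L₃.length = R.card := by
          have h1 := List.toFinset_card_of_nodup (wf_znodup L₃ hwf₃)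
          rw [hfull₃, hbR', card_bOf hR, List.length_map] at h1
          omega
        have hclncard₃ : 1 ≤ ((Finset.univ : Finset (Fin (2*k-1))) \
            (colorsOf R' ∪ (L₃.map Prod.fst).toFinset)).card := by
          have h1 : (colorsOf R').card = R.card := by rw [card_colorsOf hR', hcR']
          have h2 : ((L₃.map Prod.fst).toFinset).card ≤ R.card := by
            have := List.toFinset_card_le (L₃.map Prod.fst)
            simp only [List.length_map] at this
            omega
          have hcup : (colorsOf R' ∪ (L₃.map Prod.fst).toFinset).card ≤ 2 * R.card := by
            have := card_union_le (colorsOf R') ((L₃.map Prod.fst).toFinset)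
            omega
          rw [card_sdiff_of_subset (subset_univ _)]
          have : ((Finset.univ : Finset (Fin (2*k-1)))).card = 2*k-1 := by simp
          omega
        obtain ⟨t₃, ht₃⟩ := Finset.card_pos.mp (lt_of_lt_of_le zero_lt_one hclncard₃)
        have ht₃R : t₃ ∉ colorsOf R' := fun h => (mem_sdiff.mp ht₃).2 (mem_union_left _ h)
        have ht₃L : t₃ ∉ L₃.map Prod.fst :=
          fun h => (mem_sdiff.mp ht₃).2 (mem_union_right _ (List.mem_toFinset.mpr h))
        have ht₃ne : dstar ≠ t₃ := by
          rintro rfl; exact ht₃R hdin'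
        have hB := noFreeB hR' hmax' hwf₃ hfull₃ ht₃R ht₃L
        rw [hbR'] at hB
        exact lemA dstar t₃ ht₃ne hdfree hB
      · -- seed case: prepend (dstar, ed) to the chain and grow
        have hwfcs : Wf F R cs := chainok_to_wf cs ed.1 hco
        have hdcs : dstar ∉ cs.map Prod.fst := fun h => hdL (hds dstar h)
        have hwfseed : Wf F R ((dstar, ed.1, ed.2) :: cs) := by
          refine ⟨hwfcs, by simpa using hz₁, by simpa using hz1cs, hdR, by simpa using hdcs,
            by simpa using hed, ?_⟩
          cases cs with
          | nil => exact absurd rfl hcsne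
          | cons u cs' =>
              obtain ⟨⟨c', hlink'⟩, -⟩ := hco
              exact Or.inr ⟨(c', ed.1, u.2.2), hlink', rfl, by simp⟩
        obtain ⟨L₂, hwf₂, ⟨pre₂, hpre₂⟩, hfull₂⟩ :=
          growAux hpair' hR hmax hmle ((bOf R).card) _ hwfseed (by omega)
        refine seedFinish L₂ hwf₂ hfull₂ ?_
        rw [hpre₂, List.map_append]
        refine List.mem_append_right _ ?_
        simp
    · -- ed.1 free: singleton seed
      have hwfseed : Wf F R [(dstar, ed.1, ed.2)] := by
        exact ⟨trivial, by simpa using hz₁, by simp, hdR, by simp, by simpa using hed,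
          Or.inl hx₁⟩
      obtain ⟨L₂, hwf₂, ⟨pre₂, hpre₂⟩, hfull₂⟩ :=
        growAux hpair' hR hmax hmle ((bOf R).card) _ hwfseed (by omega)
      refine seedFinish L₂ hwf₂ hfull₂ ?_
      rw [hpre₂, List.map_append]
      refine List.mem_append_right _ ?_
      simp

end
end

section
/- For n odd, there exist n-1 (families of edge sets of) odd cycles on a vertex set of size n with no rainbow odd cycle: taking A₁ = ... = A_{n-1} to each be the edge set of the same Hamilton cycle of odd length n, no rainbow odd cycle exists, i.e., no choice of distinct edges eᵢ ∈ Aᵢ for i in some I ⊆ [n-1] forms the edge set of an odd cycle. -/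
/-- `E` is exactly the edge set of a cycle of length `m`: there are `m`
distinct vertices `v 0, …, v (m-1)` with `E` consisting of the edges of the
cyclic sequence. -/
def IsCycleEdgeSet {V : Type*} [DecidableEq V] (m : ℕ) (E : Finset (Sym2 V)) : Prop :=
  3 ≤ m ∧ ∃ v : ℕ → V, (∀ i < m, ∀ j < m, v i = v j → i = j) ∧
    E = (Finset.range m).image (fun i => s(v i, v ((i + 1) % m)))

/-- For `n` odd, the `n-1` copies of (the edge set of) a Hamilton cycle of odd
length `n` have no rainbow odd cycle. -/
theorem no_rainbow_odd_cycle_hamilton {n : ℕ} (hn : 3 ≤ n) (hodd : Odd n)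
    (A : Fin (n - 1) → Finset (Sym2 (Fin n)))
    (hA : ∀ i, A i =
      Finset.univ.image (fun i : Fin n => s(i, i + (⟨1, by omega⟩ : Fin n)))) :
    ¬ ∃ (I : Finset (Fin (n - 1))) (e : Fin (n - 1) → Sym2 (Fin n)),
        Set.InjOn e ↑I ∧ (∀ i ∈ I, e i ∈ A i) ∧
        ∃ m, Odd m ∧ IsCycleEdgeSet m (I.image e) := by
  rintro ⟨I, e, hinj, hmem, m, -, hm3, v, hv, hE⟩
  haveI : NeZero n := ⟨by omega⟩
  set o : Fin n := ⟨1, by omega⟩ with ho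
  have hval1 : ∀ a : Fin n, (a + o).val = (a.val + 1) % n := by
    intro a; simp [Fin.val_add, ho]
  have haux1 : ∀ a : Fin n, a + o ≠ a := by
    intro a h
    have h1 := hval1 a
    rw [h] at h1
    have := a.isLt
    rcases lt_or_ge (a.val + 1) n with h2 | h2
    · rw [Nat.mod_eq_of_lt h2] at h1; omega
    · rw [Nat.mod_eq_sub_mod h2, Nat.mod_eq_of_lt (by omega)] at h1; omega
  have haux2 : ∀ a : Fin n, a + o + o ≠ a := by
    intro a h
    have h1 := hval1 (a + o)
    rw [h, hval1 a, Nat.mod_add_mod] at h1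
    have := a.isLt
    rcases lt_or_ge (a.val + 2) n with h2 | h2
    · rw [Nat.mod_eq_of_lt h2] at h1; omega
    · rw [Nat.mod_eq_sub_mod h2, Nat.mod_eq_of_lt (by omega)] at h1; omega
  -- every edge of E is a Hamilton edge
  have hEH : ∀ x ∈ I.image e, ∃ k : Fin n, x = s(k, k + o) := by
    intro x hx
    obtain ⟨i, hi, rfl⟩ := Finset.mem_image.mp hx
    have := hmem i hi
    rw [hA i] at this
    obtain ⟨k, -, hk⟩ := Finset.mem_image.mp this
    exact ⟨k, hk.symm⟩
  -- the cycle edge map is injective on range m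
  have finj : ∀ i < m, ∀ j < m,
      s(v i, v ((i + 1) % m)) = s(v j, v ((j + 1) % m)) → i = j := by
    intro i hi j hj h
    rw [Sym2.eq_iff] at h
    rcases h with ⟨h1, -⟩ | ⟨h1, h2⟩
    · exact hv i hi j hj h1
    · have hij : i = (j + 1) % m := hv i hi _ (Nat.mod_lt _ (by omega)) h1
      have hji : (i + 1) % m = j := hv _ (Nat.mod_lt _ (by omega)) j hj h2
      -- i = (i + 2) % m
      have : i = (i + 2) % m := by
        have h4 : i = (i + 1 + 1) % m := by
          rw [← Nat.mod_add_mod, hji, ← hij]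
        simpa using h4
      rcases lt_or_ge (i + 2) m with h2 | h2
      · rw [Nat.mod_eq_of_lt h2] at this; omega
      · rw [Nat.mod_eq_sub_mod h2, Nat.mod_eq_of_lt (by omega)] at this; omega
  -- |E| = m
  have hcard : (I.image e).card = m := by
    rw [hE]
    rw [Finset.card_image_of_injOn, Finset.card_range]
    intro i hi j hj h
    exact finj i (Finset.mem_range.mp hi) j (Finset.mem_range.mp hj) h
  have hmlt : m < n := by
    have h1 : (I.image e).card ≤ I.card := Finset.card_image_le
    have h2 : I.card ≤ Fintype.card (Fin (n - 1)) := Finset.card_le_univ I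
    rw [Fintype.card_fin] at h2
    omega
  -- not all Hamilton edges in E
  have hnotall : ¬ ∀ k : Fin n, s(k, k + o) ∈ I.image e := by
    intro hall
    have hsub : (Finset.univ.image (fun k : Fin n => s(k, k + o))) ⊆ I.image e := by
      intro x hx
      obtain ⟨k, -, rfl⟩ := Finset.mem_image.mp hx
      exact hall k
    have hinjH : Function.Injective (fun k : Fin n => s(k, k + o)) := by
      intro a b h
      simp only [Sym2.eq_iff] at h
      rcases h with ⟨h1, -⟩ | ⟨h1, h2⟩
      · exact h1
      · exfalso; apply haux2 a; rw [h2, ← h1]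
    have := Finset.card_le_card hsub
    rw [Finset.card_image_of_injective _ hinjH, Finset.card_univ, Fintype.card_fin] at this
    omega
  -- some Hamilton edge is in E
  have hsome : ∃ a : Fin n, s(a, a + o) ∈ I.image e := by
    have hne : (I.image e).Nonempty := by
      rw [← Finset.card_pos, hcard]; omega
    obtain ⟨x, hx⟩ := hne
    obtain ⟨a, rfl⟩ := hEH x hx
    exact ⟨a, hx⟩
  -- find a boundary: s(k,k+o) ∈ E but s(k+o,k+o+o) ∉ E
  have hbdry : ∃ k : Fin n, s(k, k + o) ∈ I.image e ∧ s(k + o, k + o + o) ∉ I.image e := by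
    by_contra hcon
    push_neg at hcon
    obtain ⟨a, ha⟩ := hsome
    apply hnotall
    open Fin.NatCast in
    have hstep : ∀ t : ℕ, s(a + (t : Fin n), a + (t : Fin n) + o) ∈ I.image e := by
      intro t
      induction t with
      | zero => simpa using ha
      | succ t ih =>
        have := hcon _ ih
        have ho1 : (1 : Fin n) = o := by
          apply Fin.ext
          rw [Fin.val_one']
          exact Nat.mod_eq_of_lt (by omega)
        have hcast : ((t + 1 : ℕ) : Fin n) = (t : Fin n) + o := by
          push_cast
          rw [ho1]
        rw [hcast, ← add_assoc]
        exact this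
    intro b
    have := hstep ((b - a).val)
    rwa [Fin.cast_val_eq_self, add_comm a (b - a), sub_add_cancel] at this
  obtain ⟨k, hk, hk2⟩ := hbdry
  -- any edge of E containing k+o equals s(k,k+o)
  have hforce : ∀ x ∈ I.image e, (k + o) ∈ x → x = s(k, k + o) := by
    intro x hx hwx
    obtain ⟨c, rfl⟩ := hEH x hx
    rw [Sym2.mem_iff] at hwx
    rcases hwx with h | h
    · exfalso; rw [← h] at hx; exact hk2 hx
    · have : c = k := by
        have := h.symm
        exact add_right_cancel this
      rw [this]
  -- k+o is a vertex of the cycle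
  have hwvert : ∃ j < m, v j = k + o := by
    have hkE : s(k, k + o) ∈ (Finset.range m).image
        (fun i => s(v i, v ((i + 1) % m))) := by rw [← hE]; exact hk
    obtain ⟨i, hi, hieq⟩ := Finset.mem_image.mp hkE
    rw [Finset.mem_range] at hi
    rw [Sym2.eq_iff] at hieq
    rcases hieq with ⟨-, h2⟩ | ⟨h1, -⟩
    · exact ⟨(i + 1) % m, Nat.mod_lt _ (by omega), h2⟩
    · exact ⟨i, hi, h1⟩
  obtain ⟨j, hj, hvj⟩ := hwvert
  set p := (j + (m - 1)) % m with hp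
  have hpm : p < m := Nat.mod_lt _ (by omega)
  have hp1 : (p + 1) % m = j := by
    rw [hp, Nat.mod_add_mod]
    have : j + (m - 1) + 1 = m + j := by omega
    rw [this, Nat.add_mod_left, Nat.mod_eq_of_lt hj]
  have hjp : j ≠ p := by
    intro h
    rw [hp] at h
    rcases lt_or_ge (j + (m - 1)) m with h2 | h2
    · rw [Nat.mod_eq_of_lt h2] at h; omega
    · rw [Nat.mod_eq_sub_mod h2, Nat.mod_eq_of_lt (by omega)] at h; omega
  -- the two edges at the vertex k+o
  have he1 : s(v j, v ((j + 1) % m)) ∈ I.image e := by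
    rw [hE]; exact Finset.mem_image_of_mem _ (Finset.mem_range.mpr hj)
  have he2 : s(v p, v ((p + 1) % m)) ∈ I.image e := by
    rw [hE]; exact Finset.mem_image_of_mem _ (Finset.mem_range.mpr hpm)
  have hf1 : s(v j, v ((j + 1) % m)) = s(k, k + o) :=
    hforce _ he1 (by rw [← hvj]; exact Sym2.mem_mk_left _ _)
  have hf2 : s(v p, v ((p + 1) % m)) = s(k, k + o) :=
    hforce _ he2 (by rw [← hvj, ← hp1]; exact Sym2.mem_mk_right _ _)
  exact hjp (finj j hj p hpm (hf1.trans hf2.symm))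
end

section
/- Let k ≥ 2 and d ≥ 1. Let H be a k-uniform hypergraph with maximum vertex degree at most d, and let V₁, ..., Vₘ be pairwise disjoint sets of vertices of H, each of size at least ⌈k·e·d^{1/(k-1)}⌉. Then there exist vertices vᵢ ∈ Vᵢ (one from each part) such that {v₁, ..., vₘ} is independent in H. -/
open Finset

theorem my_num (M : ℕ) (hM : 2 ≤ M) :
    1 / (Real.exp 1 * M) ≤ (1 / M) * (1 - 1 / M) ^ (M - 1) := by
  obtain ⟨r, rfl⟩ : ∃ r, M = r + 1 := ⟨M - 1, by omega⟩
  have hr : 1 ≤ r := by omega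
  have hr0 : (0:ℝ) < r := by exact_mod_cast hr
  have hM0 : (0:ℝ) < (r:ℝ) + 1 := by linarith
  have h1 : ((1:ℝ) + 1/r) ^ r ≤ Real.exp 1 := by
    have h2 : (1:ℝ) + 1/r ≤ Real.exp (1/r) := by
      have := Real.add_one_le_exp (1/(r:ℝ)); linarith
    calc ((1:ℝ) + 1/r) ^ r ≤ (Real.exp (1/r)) ^ r :=
          pow_le_pow_left₀ (by positivity) h2 r
      _ = Real.exp ((r:ℝ) * (1/r)) := (Real.exp_nat_mul _ r).symm
      _ = Real.exp 1 := by rw [mul_one_div, div_self (ne_of_gt hr0)]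
  have h3 : (1:ℝ) - 1/((r:ℝ)+1) = ((1:ℝ) + 1/r)⁻¹ := by
    field_simp
    ring
  have hcast : ((r + 1 : ℕ) : ℝ) = (r:ℝ) + 1 := by push_cast; ring
  have hsub : (r + 1) - 1 = r := by omega
  rw [hcast, hsub, h3, inv_pow]
  have h4 : (Real.exp 1)⁻¹ ≤ (((1:ℝ) + 1/r) ^ r)⁻¹ := by
    apply inv_anti₀ (by positivity) h1
  calc 1 / (Real.exp 1 * ((r:ℝ)+1)) = (1/((r:ℝ)+1)) * (Real.exp 1)⁻¹ := by
        field_simp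
    _ ≤ (1/((r:ℝ)+1)) * (((1:ℝ) + 1/r) ^ r)⁻¹ := by
        apply mul_le_mul_of_nonneg_left h4 (by positivity)

section LLL
variable {α ι : Type*} [DecidableEq α] [DecidableEq ι]

theorem my_lll (U : Finset α) (J : Finset ι)
    (B : ι → Finset α) (Dep : ι → ι → Prop) [DecidableRel Dep]
    (x p : ℝ) (hx0 : 0 < x) (hx1 : x < 1) (hp0 : 0 ≤ p)
    (hU : U.Nonempty)
    (hp : ∀ j ∈ J, ((B j).card : ℝ) ≤ p * U.card)
    (hpx : ∀ j ∈ J, ∀ S ⊆ J, j ∉ S →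
      p ≤ x * (1 - x) ^ (S.filter (fun j' => Dep j j')).card)
    (hind : ∀ j ∈ J, ∀ S ⊆ J, (∀ j' ∈ S, ¬ Dep j j') →
      ((U.filter (fun a => a ∈ B j ∧ ∀ j' ∈ S, a ∉ B j')).card : ℝ) * U.card
        = (B j).card * (U.filter (fun a => ∀ j' ∈ S, a ∉ B j')).card) :
    ∃ a ∈ U, ∀ j ∈ J, a ∉ B j := by
  classical
  set N : Finset ι → ℝ := fun S => ((U.filter fun a => ∀ j ∈ S, a ∉ B j).card : ℝ) with hN
  set M : ι → Finset ι → ℝ :=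
    fun j S => ((U.filter fun a => a ∈ B j ∧ ∀ j' ∈ S, a ∉ B j').card : ℝ) with hM
  have hUpos : (0:ℝ) < U.card := by exact_mod_cast hU.card_pos
  have hNnonneg : ∀ S, 0 ≤ N S := fun S => Nat.cast_nonneg _
  -- splitting identity
  have hsplit : ∀ (j : ι) (S : Finset ι), N (insert j S) = N S - M j S := by
    intro j S
    have h1 : (U.filter fun a => ∀ j' ∈ insert j S, a ∉ B j')
        = (U.filter fun a => ∀ j' ∈ S, a ∉ B j').filter (fun a => a ∉ B j) := by
      rw [filter_filter]
      apply filter_congr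
      intro a _
      simp only [forall_mem_insert]
      tauto
    have h2 : (U.filter fun a => a ∈ B j ∧ ∀ j' ∈ S, a ∉ B j')
        = (U.filter fun a => ∀ j' ∈ S, a ∉ B j').filter (fun a => a ∈ B j) := by
      rw [filter_filter]
      apply filter_congr
      intro a _
      tauto
    have := Finset.card_filter_add_card_filter_not
      (s := U.filter fun a => ∀ j' ∈ S, a ∉ B j') (fun a => a ∈ B j)
    simp only [hN, hM, h1, h2]
    push_cast [← this]
    ring
  -- main claim
  have main : ∀ n : ℕ, ∀ S ⊆ J, S.card ≤ n → ∀ j ∈ J, j ∉ S → M j S ≤ x * N S := by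
    intro n
    induction n with
    | zero =>
      intro S hSJ hcard j hjJ hjS
      have hS0 : S = ∅ := card_eq_zero.mp (Nat.le_zero.mp hcard)
      subst hS0
      have h1 := hind j hjJ ∅ (empty_subset _) (by simp)
      have h2 := hp j hjJ
      have h3 := hpx j hjJ ∅ (empty_subset _) (notMem_empty _)
      simp only [filter_empty, card_empty] at h3
      norm_num at h3
      have hNe : N ∅ = (U.card : ℝ) := by simp [hN]
      have : M j ∅ * (U.card : ℝ) ≤ (x * N ∅) * U.card := by
        rw [hM, h1, hNe]
        show ((B j).card : ℝ) * (U.filter fun a => ∀ j' ∈ (∅:Finset ι), a ∉ B j').card ≤ _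
        have he : (U.filter fun a => ∀ j' ∈ (∅:Finset ι), a ∉ B j') = U := by simp
        rw [he]
        calc ((B j).card : ℝ) * U.card ≤ (p * U.card) * U.card := by
              apply mul_le_mul_of_nonneg_right h2 (le_of_lt hUpos)
          _ ≤ (x * U.card) * U.card := by
              apply mul_le_mul_of_nonneg_right _ (le_of_lt hUpos)
              exact mul_le_mul_of_nonneg_right h3 (le_of_lt hUpos)
          _ = x * (U.card : ℝ) * U.card := by ring
      exact le_of_mul_le_mul_right this hUpos
    | succ n IH =>
      intro S hSJ hcard j hjJ hjS
      set S₁ := S.filter (fun j' => Dep j j') with hS₁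
      set S₂ := S.filter (fun j' => ¬ Dep j j') with hS₂
      have hS12 : S₁ ∪ S₂ = S := filter_union_filter_not_eq _ S
      have hS₂J : S₂ ⊆ J := (filter_subset _ _).trans hSJ
      -- step 1 : M j S ≤ M j S₂
      have step1 : M j S ≤ M j S₂ := by
        have hss : (U.filter fun a => a ∈ B j ∧ ∀ j' ∈ S, a ∉ B j')
            ⊆ (U.filter fun a => a ∈ B j ∧ ∀ j' ∈ S₂, a ∉ B j') := by
          intro a ha
          rw [mem_filter] at ha ⊢
          exact ⟨ha.1, ha.2.1, fun j' hj' => ha.2.2 j' (filter_subset _ _ hj')⟩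
        simp only [hM]
        exact_mod_cast card_le_card hss
      -- step 2 : M j S₂ ≤ p * N S₂
      have step2 : M j S₂ ≤ p * N S₂ := by
        have h1 := hind j hjJ S₂ hS₂J (fun j' hj' => (mem_filter.mp hj').2)
        have : M j S₂ * (U.card : ℝ) ≤ (p * N S₂) * U.card := by
          rw [hM, h1]
          calc ((B j).card : ℝ) * N S₂ ≤ (p * U.card) * N S₂ :=
                mul_le_mul_of_nonneg_right (hp j hjJ) (hNnonneg _)
            _ = (p * N S₂) * U.card := by ring
        exact le_of_mul_le_mul_right this hUpos
      -- peeling : (1-x)^|T| * N S₂ ≤ N (S₂ ∪ T) for T ⊆ S₁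
      have hx1' : (0:ℝ) ≤ 1 - x := by linarith
      have peel : ∀ T : Finset ι, T ⊆ S₁ → (1-x) ^ T.card * N S₂ ≤ N (S₂ ∪ T) := by
        intro T
        induction T using Finset.induction_on with
        | empty => simp
        | @insert j' T hj'T ihT =>
          intro hsub
          have hsub' : T ⊆ S₁ := (subset_insert _ _).trans hsub
          have hj'S₁ : j' ∈ S₁ := hsub (mem_insert_self _ _)
          have hj'S : j' ∈ S := filter_subset _ _ hj'S₁
          have hj'J : j' ∈ J := hSJ hj'S
          have hj'nS₂ : j' ∉ S₂ := by
            simp only [hS₂, mem_filter]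
            rintro ⟨-, h⟩
            exact h (mem_filter.mp hj'S₁).2
          have hj'nU : j' ∉ S₂ ∪ T := by
            simp only [mem_union]
            rintro (h | h)
            · exact hj'nS₂ h
            · exact hj'T h
          have hsubJ : S₂ ∪ T ⊆ J := by
            apply union_subset hS₂J (((hsub'.trans (filter_subset _ _))).trans hSJ)
          have hcard' : (S₂ ∪ T).card ≤ n := by
            have h1 : S₂ ∪ T ⊆ S.erase j' := by
              intro a ha
              rcases mem_union.mp ha with h | h
              · exact mem_erase.mpr ⟨fun hh => hj'nS₂ (hh ▸ h), filter_subset _ _ h⟩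
              · exact mem_erase.mpr ⟨fun hh => hj'T (hh ▸ h),
                  filter_subset _ _ (hsub' h)⟩
            calc (S₂ ∪ T).card ≤ (S.erase j').card := card_le_card h1
              _ = S.card - 1 := card_erase_of_mem hj'S
              _ ≤ n := by omega
          have hMle := IH (S₂ ∪ T) hsubJ hcard' j' hj'J hj'nU
          have hunion : S₂ ∪ insert j' T = insert j' (S₂ ∪ T) := by
            rw [union_insert]
          rw [hunion, hsplit j' (S₂ ∪ T)]
          have hih := ihT hsub'
          calc (1-x) ^ (insert j' T).card * N S₂
              = (1-x) * ((1-x) ^ T.card * N S₂) := by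
                rw [card_insert_of_notMem hj'T]; ring
            _ ≤ (1-x) * N (S₂ ∪ T) := by
                apply mul_le_mul_of_nonneg_left hih hx1'
            _ = N (S₂ ∪ T) - x * N (S₂ ∪ T) := by ring
            _ ≤ N (S₂ ∪ T) - M j' (S₂ ∪ T) := by linarith
      have step3 : (1-x) ^ S₁.card * N S₂ ≤ N S := by
        have := peel S₁ (Finset.Subset.refl _)
        rwa [union_comm, hS12] at this
      have step4 : p ≤ x * (1-x) ^ S₁.card := hpx j hjJ S hSJ hjS
      calc M j S ≤ M j S₂ := step1
        _ ≤ p * N S₂ := step2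
        _ ≤ (x * (1-x) ^ S₁.card) * N S₂ :=
            mul_le_mul_of_nonneg_right step4 (hNnonneg _)
        _ = x * ((1-x) ^ S₁.card * N S₂) := by ring
        _ ≤ x * N S := mul_le_mul_of_nonneg_left step3 (le_of_lt hx0)
  -- positivity
  have pos : ∀ S : Finset ι, S ⊆ J → 0 < N S := by
    intro S
    induction S using Finset.induction_on with
    | empty => intro _; simpa [hN] using hUpos
    | @insert j S hjS ih =>
      intro hsub
      have hSJ : S ⊆ J := (subset_insert _ _).trans hsub
      have hjJ : j ∈ J := hsub (mem_insert_self _ _)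
      have h1 := main S.card S hSJ le_rfl j hjJ hjS
      have h2 := ih hSJ
      rw [hsplit j S]
      nlinarith
  have hfin := pos J (Finset.Subset.refl _)
  have : (U.filter fun a => ∀ j ∈ J, a ∉ B j).Nonempty := by
    rw [← card_pos]
    simp only [hN] at hfin
    exact_mod_cast hfin
  obtain ⟨a, ha⟩ := this
  rw [mem_filter] at ha
  exact ⟨a, ha.1, ha.2⟩

end LLL

theorem my_indep_count {m : ℕ} {V : Type*} [DecidableEq V]
    (A : Fin m → Finset V) (E F : Finset (Fin m → V))
    (S T : Finset (Fin m)) (hST : Disjoint S T)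
    (hE : E ⊆ Fintype.piFinset A) (hF : F ⊆ Fintype.piFinset A)
    (hdE : ∀ f ∈ Fintype.piFinset A, ∀ g ∈ Fintype.piFinset A,
      (∀ i ∈ S, f i = g i) → (f ∈ E ↔ g ∈ E))
    (hdF : ∀ f ∈ Fintype.piFinset A, ∀ g ∈ Fintype.piFinset A,
      (∀ i ∈ T, f i = g i) → (f ∈ F ↔ g ∈ F)) :
    (E ∩ F).card * (Fintype.piFinset A).card = E.card * F.card := by
  classical
  set U := Fintype.piFinset A with hU
  set mg : (Fin m → V) → (Fin m → V) → (Fin m → V) :=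
    fun f g i => if i ∈ S then f i else g i with hmg
  have hmgU : ∀ f ∈ U, ∀ g ∈ U, mg f g ∈ U := by
    intro f hf g hg
    rw [Fintype.mem_piFinset] at *
    intro i
    by_cases h : i ∈ S <;> simp [hmg, h, hf i, hg i]
  have hagS : ∀ f g, ∀ i ∈ S, mg f g i = f i := by
    intro f g i hi; simp [hmg, hi]
  have hagT : ∀ f g, ∀ i ∈ T, mg f g i = g i := by
    intro f g i hi
    have : i ∉ S := fun h => (disjoint_left.mp hST h) hi
    simp [hmg, this]
  have key : (E ×ˢ F).card = ((E ∩ F) ×ˢ U).card := by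
    apply Finset.card_bij' (fun p _ => (mg p.1 p.2, mg p.2 p.1))
      (fun q _ => (mg q.1 q.2, mg q.2 q.1))
    · rintro ⟨f, g⟩ hp
      rw [mem_product] at hp ⊢
      obtain ⟨hfE, hgF⟩ := hp
      have hfU : f ∈ U := hE hfE
      have hgU : g ∈ U := hF hgF
      have h1 : mg f g ∈ U := hmgU f hfU g hgU
      have h2 : mg g f ∈ U := hmgU g hgU f hfU
      refine ⟨mem_inter.mpr ⟨?_, ?_⟩, h2⟩
      · exact (hdE f hfU (mg f g) h1 (fun i hi => (hagS f g i hi).symm)).mp hfE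
      · exact (hdF g hgU (mg f g) h1 (fun i hi => (hagT f g i hi).symm)).mp hgF
    · rintro ⟨h, h'⟩ hq
      rw [mem_product] at hq ⊢
      obtain ⟨hhEF, hh'U⟩ := hq
      rw [mem_inter] at hhEF
      have hhU : h ∈ U := hE hhEF.1
      have h1 : mg h h' ∈ U := hmgU h hhU h' hh'U
      have h2 : mg h' h ∈ U := hmgU h' hh'U h hhU
      constructor
      · exact (hdE h hhU (mg h h') h1 (fun i hi => (hagS h h' i hi).symm)).mp hhEF.1
      · exact (hdF h hhU (mg h' h) h2 (fun i hi => (hagT h' h i hi).symm)).mp hhEF.2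
    · rintro ⟨f, g⟩ _
      simp only [Prod.mk.injEq]
      constructor <;> (funext i; by_cases h : i ∈ S <;> simp [hmg, h])
    · rintro ⟨h, h'⟩ _
      simp only [Prod.mk.injEq]
      constructor <;> (funext i; by_cases hh : i ∈ S <;> simp [hmg, hh])
  rw [card_product, card_product] at key
  rw [mul_comm (E.card) (F.card), ← key, mul_comm]

/-- Rainbow independent sets in hypergraphs via the Lovász Local Lemma: if `H`
is `k`-uniform with maximum degree at most `d`, then any family of pairwise
disjoint vertex sets, each of size at least `⌈k·e·d^(1/(k-1))⌉`, has a full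
rainbow independent set. -/
theorem rainbow_independent_hypergraph {V : Type*} [DecidableEq V]
    {k d m : ℕ} (hk : 2 ≤ k) (hd : 1 ≤ d)
    (H : Finset (Finset V))
    (huniform : ∀ e ∈ H, e.card = k)
    (hdeg : ∀ v : V, (H.filter (fun e => v ∈ e)).card ≤ d)
    (A : Fin m → Finset V)
    (hdisj : ∀ i j, i ≠ j → Disjoint (A i) (A j))
    (hsize : ∀ i, ⌈(k : ℝ) * Real.exp 1 * (d : ℝ) ^ ((1 : ℝ) / (k - 1 : ℝ))⌉₊
      ≤ (A i).card) :
    ∃ v : Fin m → V, (∀ i, v i ∈ A i) ∧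
      ∀ e ∈ H, ¬ e ⊆ Finset.univ.image v := by
  classical
  set n : ℕ := ⌈(k : ℝ) * Real.exp 1 * (d : ℝ) ^ ((1 : ℝ) / (k - 1 : ℝ))⌉₊ with hn
  -- basic numeric facts
  have hkR : (2:ℝ) ≤ (k:ℝ) := by exact_mod_cast hk
  have hdR : (1:ℝ) ≤ (d:ℝ) := by exact_mod_cast hd
  have ht1 : (1:ℝ) ≤ (d : ℝ) ^ ((1 : ℝ) / (k - 1 : ℝ)) := by
    apply Real.one_le_rpow hdR (div_nonneg zero_le_one (by linarith))
  have hnlb : (k:ℝ) * Real.exp 1 * (d : ℝ) ^ ((1 : ℝ) / (k - 1 : ℝ)) ≤ (n:ℝ) :=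
    Nat.le_ceil _
  have hexp1 : (1:ℝ) ≤ Real.exp 1 := by
    have := Real.add_one_le_exp (1:ℝ); linarith
  have hn1 : 1 ≤ n := by
    have hke : (2:ℝ) ≤ (k:ℝ) * Real.exp 1 := by nlinarith
    have h5 : (1:ℝ) ≤ (k:ℝ) * Real.exp 1 * (d : ℝ) ^ ((1 : ℝ) / (k - 1 : ℝ)) := by
      nlinarith
    have : (1:ℝ) ≤ (n:ℝ) := by linarith
    exact_mod_cast this
  have hnR : (1:ℝ) ≤ (n:ℝ) := by exact_mod_cast hn1
  -- the key numeric inequality : e * (k*n*d) ≤ n^k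
  have hkey : Real.exp 1 * ((k:ℝ) * n * d) ≤ (n:ℝ) ^ k := by
    have hpow : ((d : ℝ) ^ ((1 : ℝ) / (k - 1 : ℝ))) ^ (k-1) = (d:ℝ) := by
      rw [← Real.rpow_natCast ((d : ℝ) ^ ((1 : ℝ) / (k - 1 : ℝ))) (k-1),
        ← Real.rpow_mul (by positivity)]
      have hc : ((k - 1 : ℕ) : ℝ) = (k:ℝ) - 1 := by
        push_cast [Nat.cast_sub (by omega : 1 ≤ k)]; ring
      rw [hc, one_div, inv_mul_cancel₀ (by linarith), Real.rpow_one]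
    have h1 : ((k:ℝ) * Real.exp 1 * (d : ℝ) ^ ((1 : ℝ) / (k - 1 : ℝ))) ^ (k-1)
        ≤ (n:ℝ) ^ (k-1) := pow_le_pow_left₀ (by positivity) hnlb _
    have h2 : ((k:ℝ) * Real.exp 1 * (d : ℝ) ^ ((1 : ℝ) / (k - 1 : ℝ))) ^ (k-1)
        = (k:ℝ)^(k-1) * (Real.exp 1)^(k-1) * (d:ℝ) := by
      rw [mul_pow, mul_pow, hpow]
    have h3 : (k:ℝ) * Real.exp 1 * (d:ℝ) ≤ (k:ℝ)^(k-1) * (Real.exp 1)^(k-1) * (d:ℝ) := by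
      have hk1 : (k:ℝ) ≤ (k:ℝ)^(k-1) := by
        calc (k:ℝ) = (k:ℝ)^1 := (pow_one _).symm
          _ ≤ (k:ℝ)^(k-1) := pow_le_pow_right₀ (by linarith) (by omega)
      have he1 : Real.exp 1 ≤ (Real.exp 1)^(k-1) := by
        calc Real.exp 1 = (Real.exp 1)^1 := (pow_one _).symm
          _ ≤ (Real.exp 1)^(k-1) := pow_le_pow_right₀ hexp1 (by omega)
      have := mul_le_mul hk1 he1 (by positivity) (by positivity)
      nlinarith
    have h4 : (k:ℝ) * Real.exp 1 * (d:ℝ) ≤ (n:ℝ)^(k-1) := by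
      calc (k:ℝ) * Real.exp 1 * (d:ℝ) ≤ _ := h3
        _ = _ := h2.symm
        _ ≤ (n:ℝ)^(k-1) := h1
    calc Real.exp 1 * ((k:ℝ) * n * d) = ((k:ℝ) * Real.exp 1 * d) * n := by ring
      _ ≤ (n:ℝ)^(k-1) * (n:ℝ) := mul_le_mul_of_nonneg_right h4 (by linarith)
      _ = (n:ℝ)^(k-1+1) := (pow_succ _ _).symm
      _ = (n:ℝ)^k := by congr 1; omega
  -- shrink the sets
  have hsub : ∀ i, ∃ B ⊆ A i, B.card = n := fun i => exists_subset_card_eq (hsize i)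
  choose A' hA'sub hA'card using hsub
  have hdisj' : ∀ i j, i ≠ j → Disjoint (A' i) (A' j) :=
    fun i j h => (hdisj i j h).mono (hA'sub i) (hA'sub j)
  set U : Finset (Fin m → V) := Fintype.piFinset A' with hU
  have hUcard : U.card = n ^ m := by
    rw [hU, Fintype.card_piFinset]
    simp [hA'card]
  have hUne : U.Nonempty := by
    rw [← card_pos, hUcard]
    exact pow_pos (by omega) m
  -- events and coordinate sets
  set B : Finset V → Finset (Fin m → V) :=
    fun e => U.filter (fun f => e ⊆ Finset.univ.image f) with hB
  set T : Finset V → Finset (Fin m) :=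
    fun e => Finset.univ.filter (fun i => ∃ w ∈ e, w ∈ A' i) with hT
  set Dep : Finset V → Finset V → Prop :=
    fun e e' => ¬ Disjoint (T e) (T e') with hDep
  -- determinedness
  have hdet : ∀ e : Finset V, ∀ f ∈ U, ∀ g ∈ U, (∀ i ∈ T e, f i = g i) →
      (f ∈ B e ↔ g ∈ B e) := by
    have aux : ∀ e : Finset V, ∀ f' ∈ U, ∀ g' ∈ U, (∀ i ∈ T e, f' i = g' i) →
        e ⊆ Finset.univ.image f' → e ⊆ Finset.univ.image g' := by
      intro e f' hf' g' hg' hag' hsub w hw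
      obtain ⟨i, -, hi⟩ := Finset.mem_image.mp (hsub hw)
      have hwA : w ∈ A' i := by rw [← hi]; exact Fintype.mem_piFinset.mp hf' i
      have hiT : i ∈ T e := by
        rw [hT]
        simp only [mem_filter, mem_univ, true_and]
        exact ⟨w, hw, hwA⟩
      have hgw : g' i = w := by rw [← hag' i hiT]; exact hi
      exact Finset.mem_image.mpr ⟨i, mem_univ i, hgw⟩
    intro e f hfU g hgU hag
    rw [hB]
    simp only [mem_filter]
    constructor
    · rintro ⟨-, h2⟩; exact ⟨hgU, aux e f hfU g hgU hag h2⟩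
    · rintro ⟨-, h2⟩
      exact ⟨hfU, aux e g hgU f hfU (fun i hi => (hag i hi).symm) h2⟩
  -- |T e| ≤ k
  have hTdisj : ∀ e : Finset V, ∀ i ∈ T e, ∀ j ∈ T e, i ≠ j →
      Disjoint (e ∩ A' i) (e ∩ A' j) := by
    intro e i _ j _ hij
    exact (hdisj' i j hij).mono inter_subset_right inter_subset_right
  have hTne : ∀ e : Finset V, ∀ i ∈ T e, (e ∩ A' i).Nonempty := by
    intro e i hi
    rw [hT, mem_filter] at hi
    obtain ⟨-, w, hw1, hw2⟩ := hi
    exact ⟨w, mem_inter.mpr ⟨hw1, hw2⟩⟩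
  have hTle : ∀ e ∈ H, (T e).card ≤ k := by
    intro e heH
    calc (T e).card = ∑ _i ∈ T e, 1 := by rw [sum_const, smul_eq_mul, mul_one]
      _ ≤ ∑ i ∈ T e, (e ∩ A' i).card :=
          sum_le_sum (fun i hi => card_pos.mpr (hTne e i hi))
      _ = ((T e).biUnion (fun i => e ∩ A' i)).card := (card_biUnion (hTdisj e)).symm
      _ ≤ e.card := card_le_card (biUnion_subset.mpr (fun i _ => inter_subset_left))
      _ = k := huniform e heH
  -- probability bound
  set p : ℝ := 1 / (n:ℝ)^k with hp'
  have hp0 : 0 ≤ p := by positivity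
  have hfix : ∀ e : Finset V, ∀ f ∈ B e, ∀ i, ∀ w ∈ e, w ∈ A' i → f i = w := by
    intro e f hf i w hwe hwA
    rw [hB, mem_filter] at hf
    obtain ⟨hfU, hsub⟩ := hf
    obtain ⟨i', -, hi'⟩ := mem_image.mp (hsub hwe)
    have hwA' : w ∈ A' i' := by rw [← hi']; exact Fintype.mem_piFinset.mp hfU i'
    have hii : i' = i := by
      by_contra hne
      exact (disjoint_left.mp (hdisj' i' i hne) hwA') hwA
    rw [← hii]; exact hi'
  have hprob : ∀ e ∈ H, ((B e).card : ℝ) ≤ p * U.card := by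
    intro e heH
    rcases (B e).eq_empty_or_nonempty with hBe | ⟨f₀, hf₀⟩
    · rw [hBe]
      simp only [card_empty, Nat.cast_zero]
      positivity
    · -- T e has exactly k elements
      have hle1 : ∀ i, (e ∩ A' i).card ≤ 1 := by
        intro i
        apply card_le_one.mpr
        intro a ha b hb
        rw [mem_inter] at ha hb
        rw [← hfix e f₀ hf₀ i a ha.1 ha.2, ← hfix e f₀ hf₀ i b hb.1 hb.2]
      have hcover : e ⊆ (T e).biUnion (fun i => e ∩ A' i) := by
        intro w hw
        have hw' : w ∈ Finset.univ.image f₀ := by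
          rw [hB, mem_filter] at hf₀
          exact hf₀.2 hw
        obtain ⟨i, -, hi⟩ := mem_image.mp hw'
        have hwA : w ∈ A' i := by
          rw [← hi]
          exact Fintype.mem_piFinset.mp ((filter_subset _ _) hf₀) i
        have hiT : i ∈ T e := by
          rw [hT]; simp only [mem_filter, mem_univ, true_and]; exact ⟨w, hw, hwA⟩
        exact mem_biUnion.mpr ⟨i, hiT, mem_inter.mpr ⟨hw, hwA⟩⟩
      have hTk : (T e).card = k := by
        have h1 : k ≤ (T e).card := by
          calc k = e.card := (huniform e heH).symm
            _ ≤ ((T e).biUnion (fun i => e ∩ A' i)).card := card_le_card hcover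
            _ = ∑ i ∈ T e, (e ∩ A' i).card := card_biUnion (hTdisj e)
            _ ≤ ∑ _i ∈ T e, 1 := sum_le_sum (fun i _ => hle1 i)
            _ = (T e).card := by rw [sum_const, smul_eq_mul, mul_one]
        exact le_antisymm (hTle e heH) h1
      have hkm : k ≤ m := by
        calc k = (T e).card := hTk.symm
          _ ≤ (Finset.univ : Finset (Fin m)).card := card_le_card (subset_univ _)
          _ = m := by rw [card_univ, Fintype.card_fin]
      -- B e is inside a cylinder
      set C : Finset (Fin m → V) :=
        Fintype.piFinset (fun i => if i ∈ T e then {f₀ i} else A' i) with hC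
      have hBC : B e ⊆ C := by
        intro f hf
        have hfU : f ∈ U := (filter_subset _ _) hf
        rw [hC, Fintype.mem_piFinset]
        intro i
        by_cases hi : i ∈ T e
        · rw [if_pos hi, mem_singleton]
          obtain ⟨w, hw⟩ := hTne e i hi
          rw [mem_inter] at hw
          rw [hfix e f hf i w hw.1 hw.2, hfix e f₀ hf₀ i w hw.1 hw.2]
        · rw [if_neg hi]
          exact Fintype.mem_piFinset.mp hfU i
      have hCcard : C.card = n ^ (m - k) := by
        rw [hC, Fintype.card_piFinset]
        have hterm : ∀ i : Fin m,
            (if i ∈ T e then ({f₀ i} : Finset V) else A' i).card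
            = if i ∈ T e then 1 else n := by
          intro i
          by_cases hi : i ∈ T e
          · rw [if_pos hi, if_pos hi, card_singleton]
          · rw [if_neg hi, if_neg hi, hA'card]
        calc ∏ i, (if i ∈ T e then ({f₀ i} : Finset V) else A' i).card
            = ∏ i, (if i ∈ T e then 1 else n) := by
              exact Finset.prod_congr rfl (fun i _ => hterm i)
          _ = (∏ i ∈ T e, (if i ∈ T e then 1 else n))
              * ∏ i ∈ (T e)ᶜ, (if i ∈ T e then 1 else n) :=
              (prod_mul_prod_compl (T e) _).symm
          _ = 1 * n ^ ((T e)ᶜ.card) := by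
              congr 1
              · apply Finset.prod_eq_one
                intro i hi; rw [if_pos hi]
              · rw [Finset.prod_congr rfl (fun i hi => by
                  rw [if_neg (mem_compl.mp hi)]), prod_const]
          _ = n ^ (m - k) := by
              rw [one_mul, card_compl, hTk, Fintype.card_fin]
      have hBcard : (B e).card ≤ n ^ (m - k) := hCcard ▸ card_le_card hBC
      have hpU : p * (U.card : ℝ) = (n:ℝ) ^ (m - k) := by
        have hn0 : (0:ℝ) < (n:ℝ) := by linarith
        rw [hp', hUcard]
        push_cast
        rw [div_mul_eq_mul_div, one_mul,
          div_eq_iff (ne_of_gt (pow_pos hn0 k)), ← pow_add]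
        congr 1
        omega
      rw [hpU]
      exact_mod_cast hBcard
  -- parameters
  set M : ℕ := k * n * d with hM
  have hM2 : 2 ≤ M := by
    have : 2 * 1 * 1 ≤ k * n * d := by
      apply Nat.mul_le_mul (Nat.mul_le_mul hk hn1) hd
    omega
  have hMR : (2:ℝ) ≤ (M:ℝ) := by exact_mod_cast hM2
  set x : ℝ := 1 / (M:ℝ) with hx'
  have hx0 : 0 < x := by positivity
  have hx1 : x < 1 := by
    rw [hx', div_lt_one (by linarith)]; linarith
  -- degree bound
  have hdegree : ∀ e ∈ H, (H.filter (fun e' => e' ≠ e ∧ Dep e e')).card ≤ M - 1 := by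
    intro e heH
    by_cases hTe : T e = ∅
    · have hempty : H.filter (fun e' => e' ≠ e ∧ Dep e e') = ∅ := by
        apply filter_eq_empty_iff.mpr
        rintro e' _ ⟨-, hdep⟩
        rw [hDep] at hdep
        exact hdep (by rw [hTe]; exact disjoint_empty_left _)
      rw [hempty, card_empty]
      omega
    · obtain ⟨i₀, hi₀⟩ := nonempty_iff_ne_empty.mpr hTe
      set BIG : Finset (Finset V) := (T e).biUnion
        (fun i => (A' i).biUnion (fun w => H.filter (fun e' => w ∈ e'))) with hBIG
      have heBIG : e ∈ BIG := by
        rw [hT, mem_filter] at hi₀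
        obtain ⟨-, w, hwe, hwA⟩ := hi₀
        refine mem_biUnion.mpr ⟨i₀, ?_, mem_biUnion.mpr ⟨w, hwA, mem_filter.mpr ⟨heH, hwe⟩⟩⟩
        rw [hT, mem_filter]
        exact ⟨mem_univ _, w, hwe, hwA⟩
      have hsubBIG : H.filter (fun e' => e' ≠ e ∧ Dep e e') ⊆ BIG.erase e := by
        intro e' he'
        rw [mem_filter] at he'
        obtain ⟨he'H, hne, hdep⟩ := he'
        rw [hDep] at hdep
        obtain ⟨i, hi1, hi2⟩ := not_disjoint_iff.mp hdep
        rw [hT, mem_filter] at hi2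
        obtain ⟨-, w, hwe', hwA⟩ := hi2
        exact mem_erase.mpr ⟨hne, mem_biUnion.mpr ⟨i, hi1,
          mem_biUnion.mpr ⟨w, hwA, mem_filter.mpr ⟨he'H, hwe'⟩⟩⟩⟩
      have hBIGcard : BIG.card ≤ M := by
        calc BIG.card ≤ ∑ i ∈ T e, ((A' i).biUnion
              (fun w => H.filter (fun e' => w ∈ e'))).card := card_biUnion_le
          _ ≤ ∑ _i ∈ T e, n * d := by
              apply sum_le_sum
              intro i _
              calc ((A' i).biUnion (fun w => H.filter (fun e' => w ∈ e'))).card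
                  ≤ ∑ w ∈ A' i, (H.filter (fun e' => w ∈ e')).card := card_biUnion_le
                _ ≤ ∑ _w ∈ A' i, d := sum_le_sum (fun w _ => hdeg w)
                _ = n * d := by rw [sum_const, smul_eq_mul, hA'card]
          _ = (T e).card * (n * d) := by rw [sum_const, smul_eq_mul]
          _ ≤ k * (n * d) := Nat.mul_le_mul_right _ (hTle e heH)
          _ = M := by rw [hM, mul_assoc]
      calc (H.filter (fun e' => e' ≠ e ∧ Dep e e')).card
          ≤ (BIG.erase e).card := card_le_card hsubBIG
        _ = BIG.card - 1 := card_erase_of_mem heBIG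
        _ ≤ M - 1 := by omega
  -- numeric condition
  have hpx : ∀ e ∈ H, ∀ S ⊆ H, e ∉ S →
      p ≤ x * (1 - x) ^ (S.filter (fun e' => Dep e e')).card := by
    intro e heH S hSH heS
    have hd1 : (S.filter (fun e' => Dep e e')).card ≤ M - 1 := by
      apply le_trans (card_le_card _) (hdegree e heH)
      intro e' he'
      rw [mem_filter] at he' ⊢
      exact ⟨hSH he'.1, fun h => heS (h ▸ he'.1), he'.2⟩
    have h1x0 : (0:ℝ) ≤ 1 - x := by linarith
    have h1x1 : (1:ℝ) - x ≤ 1 := by linarith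
    calc p ≤ 1 / (Real.exp 1 * M) := by
          rw [hp']
          apply one_div_le_one_div_of_le (by positivity)
          calc Real.exp 1 * (M:ℝ) = Real.exp 1 * ((k:ℝ)*n*d) := by
                rw [hM]; push_cast; ring
            _ ≤ (n:ℝ)^k := hkey
      _ ≤ (1/M) * (1 - 1/M) ^ (M-1) := my_num M hM2
      _ = x * (1-x) ^ (M-1) := by rw [hx']
      _ ≤ x * (1-x) ^ (S.filter (fun e' => Dep e e')).card := by
          apply mul_le_mul_of_nonneg_left _ (le_of_lt hx0)
          exact pow_le_pow_of_le_one h1x0 h1x1 hd1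
  -- independence
  have hind : ∀ e ∈ H, ∀ S ⊆ H, (∀ e' ∈ S, ¬ Dep e e') →
      ((U.filter (fun a => a ∈ B e ∧ ∀ e' ∈ S, a ∉ B e')).card : ℝ) * U.card
        = (B e).card * (U.filter (fun a => ∀ e' ∈ S, a ∉ B e')).card := by
    intro e heH S hSH hnd
    set F : Finset (Fin m → V) := U.filter (fun f => ∀ e' ∈ S, f ∉ B e') with hF
    set TT : Finset (Fin m) := S.biUnion T with hTT
    have hdisjTT : Disjoint (T e) TT := by
      rw [hTT, disjoint_biUnion_right]
      intro e' he'
      have h := hnd e' he'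
      rw [hDep] at h
      exact not_not.mp h
    have hdetF : ∀ f ∈ Fintype.piFinset A', ∀ g ∈ Fintype.piFinset A',
        (∀ i ∈ TT, f i = g i) → (f ∈ F ↔ g ∈ F) := by
      intro f hf g hg hag
      have hiff : ∀ e' ∈ S, (f ∈ B e' ↔ g ∈ B e') := by
        intro e' he'
        exact hdet e' f hf g hg (fun i hi => hag i (mem_biUnion.mpr ⟨e', he', hi⟩))
      rw [hF]
      simp only [mem_filter]
      constructor
      · rintro ⟨-, h2⟩
        exact ⟨hg, fun e' he' hgB => h2 e' he' ((hiff e' he').mpr hgB)⟩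
      · rintro ⟨-, h2⟩
        exact ⟨hf, fun e' he' hfB => h2 e' he' ((hiff e' he').mp hfB)⟩
    have hcount := my_indep_count A' (B e) F (T e) TT hdisjTT
      (filter_subset _ _) (filter_subset _ _) (hdet e) hdetF
    have hEq : U.filter (fun a => a ∈ B e ∧ ∀ e' ∈ S, a ∉ B e') = B e ∩ F := by
      ext a
      simp only [mem_filter, mem_inter, hF]
      constructor
      · rintro ⟨h1, h2, h3⟩; exact ⟨h2, h1, h3⟩
      · rintro ⟨h1, h2, h3⟩; exact ⟨h2, h1, h3⟩
    rw [hEq]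
    exact_mod_cast hcount
  -- apply LLL
  obtain ⟨f, hfU, hf⟩ := my_lll U H B Dep x p hx0 hx1 hp0 hUne hprob hpx hind
  refine ⟨f, fun i => hA'sub i ?_, fun e he hcon => ?_⟩
  · exact Fintype.mem_piFinset.mp hfU i
  · exact hf e he (mem_filter.mpr ⟨hfU, hcon⟩)
end
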